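/- arXiv:math/9911063 — 5 statements merged into one kernel-verified Lean document; each statement's English description precedes it below -/
import Mathlib

section
/- Let G be a group, ι : K → G an injective group homomorphism whose image is a normal subgroup of G, and ρ : G → H a surjective group homomorphism with ker ρ = im ι. Let S_H and S_K be sets, π_H : FreeGroup S_H → H and π_K : FreeGroup S_K → K surjective homomorphisms, and R_H ⊆ FreeGroup S_H, R_K ⊆ FreeGroup S_K subsets such that ker π_H is the normal closure of R_H and ker π_K is the normal closure of R_K. Let σ : S_H → G satisfy ρ(σ(x)) = π_H(of x) for every x ∈ S_H, and let φ : FreeGroup S_H → G be the homomorphism extending σ. Suppose given, for each r ∈ R_H, an element w_r ∈ FreeGroup S_K with φ(r) = ι(π_K(w_r)), and, for each x ∈ S_H and y ∈ S_K, an element v(x,y) ∈ FreeGroup S_K with σ(x)·ι(π_K(of y))·σ(x)⁻¹ = ι(π_K(v(x,y))). Let ψ : FreeGroup (S_H ⊕ S_K) → G be the homomorphism with ψ(of (inl x)) = σ(x) and ψ(of (inr y)) = ι(π_K(of y)), and let j_H : FreeGroup S_H → FreeGroup (S_H ⊕ S_K) and j_K : FreeGroup S_K → FreeGroup (S_H ⊕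 S_K) be the canonical embeddings. Then ψ is surjective and ker ψ is the normal closure of R_1 ∪ R_2 ∪ j_K(R_K), where R_1 = { j_H(r)·j_K(w_r)⁻¹ : r ∈ R_H } and R_2 = { of(inl x)·of(inr y)·of(inl x)⁻¹·j_K(v(x,y))⁻¹ : x ∈ S_H, y ∈ S_K }. -/
/-- **Lemma 2.5** of Labruère–Paris, "Presentations for the punctured mapping class
groups in terms of Artin groups": a presentation for the middle group of a short
exact sequence `1 → K → G → H → 1` from presentations of `K` and `H`. -/
theorem presentation_of_extension
    {G H K : Type*} [Group G] [Group H] [Group K]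
    {S_H S_K : Type*}
    (ι : K →* G) (hι_inj : Function.Injective ι) (hι_norm : ι.range.Normal)
    (ρ : G →* H) (hρ_surj : Function.Surjective ρ) (hker : ρ.ker = ι.range)
    (π_H : FreeGroup S_H →* H) (hπH : Function.Surjective π_H)
    (π_K : FreeGroup S_K →* K) (hπK : Function.Surjective π_K)
    (R_H : Set (FreeGroup S_H)) (hRH : π_H.ker = Subgroup.normalClosure R_H)
    (R_K : Set (FreeGroup S_K)) (hRK : π_K.ker = Subgroup.normalClosure R_K)
    (σ : S_H → G) (hσ : ∀ x : S_H, ρ (σ x) = π_H (FreeGroup.of x))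
    (φ : FreeGroup S_H →* G) (hφ : ∀ x : S_H, φ (FreeGroup.of x) = σ x)
    (w : R_H → FreeGroup S_K) (hw : ∀ r : R_H, φ r.1 = ι (π_K (w r)))
    (v : S_H → S_K → FreeGroup S_K)
    (hv : ∀ (x : S_H) (y : S_K),
      σ x * ι (π_K (FreeGroup.of y)) * (σ x)⁻¹ = ι (π_K (v x y)))
    (ψ : FreeGroup (S_H ⊕ S_K) →* G)
    (hψ1 : ∀ x : S_H, ψ (FreeGroup.of (Sum.inl x)) = σ x)
    (hψ2 : ∀ y : S_K, ψ (FreeGroup.of (Sum.inr y)) = ι (π_K (FreeGroup.of y))) :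
    Function.Surjective ψ ∧
      ψ.ker = Subgroup.normalClosure
        ((Set.range fun r : R_H =>
            FreeGroup.map Sum.inl r.1 * (FreeGroup.map Sum.inr (w r))⁻¹) ∪
          {u | ∃ (x : S_H) (y : S_K),
            u = FreeGroup.of (Sum.inl x) * FreeGroup.of (Sum.inr y) *
                (FreeGroup.of (Sum.inl x))⁻¹ * (FreeGroup.map Sum.inr (v x y))⁻¹} ∪
          (FreeGroup.map Sum.inr '' R_K)) := by
  classical
  haveI := hι_norm
  set jH : FreeGroup S_H →* FreeGroup (S_H ⊕ S_K) :=
    FreeGroup.map (Sum.inl : S_H → S_H ⊕ S_K) with hjHdef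
  set jK : FreeGroup S_K →* FreeGroup (S_H ⊕ S_K) :=
    FreeGroup.map (Sum.inr : S_K → S_H ⊕ S_K) with hjKdef
  -- basic composition facts
  have hψφ : ∀ u : FreeGroup S_H, ψ (jH u) = φ u := by
    intro u
    have : ψ.comp jH = φ := FreeGroup.ext_hom _ _ fun x => by
      simp [hjHdef, FreeGroup.map.of, hψ1, hφ]
    exact DFunLike.congr_fun this u
  have hψK : ∀ s : FreeGroup S_K, ψ (jK s) = ι (π_K s) := by
    intro s
    have : ψ.comp jK = ι.comp π_K := FreeGroup.ext_hom _ _ fun y => by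
      simp [hjKdef, FreeGroup.map.of, hψ2]
    exact DFunLike.congr_fun this s
  have hρφ : ∀ u : FreeGroup S_H, ρ (φ u) = π_H u := by
    intro u
    have : ρ.comp φ = π_H := FreeGroup.ext_hom _ _ fun x => by simp [hφ, hσ]
    exact DFunLike.congr_fun this u
  -- surjectivity
  have hsurj : Function.Surjective ψ := by
    intro g
    obtain ⟨u, hu⟩ := hπH (ρ g)
    have h1 : g * (φ u)⁻¹ ∈ ι.range := by
      rw [← hker, MonoidHom.mem_ker, map_mul, map_inv, hρφ, hu, mul_inv_cancel]
    obtain ⟨k, hk⟩ := h1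
    obtain ⟨t, ht⟩ := hπK k
    refine ⟨jK t * jH u, ?_⟩
    rw [map_mul, hψK, hψφ, ht, hk]
    group
  set Rset : Set (FreeGroup (S_H ⊕ S_K)) :=
    ((Set.range fun r : R_H => jH r.1 * (jK (w r))⁻¹) ∪
      {u | ∃ (x : S_H) (y : S_K),
        u = FreeGroup.of (Sum.inl x) * FreeGroup.of (Sum.inr y) *
            (FreeGroup.of (Sum.inl x))⁻¹ * (jK (v x y))⁻¹} ∪
      (jK '' R_K)) with hRsetdef
  set N : Subgroup (FreeGroup (S_H ⊕ S_K)) := Subgroup.normalClosure Rset with hNdef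
  refine ⟨hsurj, ?_⟩
  -- N ≤ ker ψ
  have hNle : N ≤ ψ.ker := by
    refine Subgroup.normalClosure_le_normal ?_
    rintro u ((h | h) | h)
    · obtain ⟨r, rfl⟩ := h
      have : ψ (jH r.1 * (jK (w r))⁻¹) = 1 := by
        rw [map_mul, map_inv, hψφ, hψK, hw, mul_inv_cancel]
      exact this
    · obtain ⟨x, y, rfl⟩ := h
      have : ψ (FreeGroup.of (Sum.inl x) * FreeGroup.of (Sum.inr y) *
          (FreeGroup.of (Sum.inl x))⁻¹ * (jK (v x y))⁻¹) = 1 := by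
        rw [map_mul, map_mul, map_mul, map_inv, map_inv, hψ1, hψ2, hψK, hv,
          mul_inv_cancel]
      exact this
    · obtain ⟨s, hs, rfl⟩ := h
      have hs1 : π_K s = 1 := by
        have : s ∈ π_K.ker := by
          rw [hRK]; exact Subgroup.subset_normalClosure hs
        exact this
      have : ψ (jK s) = 1 := by rw [hψK, hs1, map_one]
      exact this
  set q : FreeGroup (S_H ⊕ S_K) →* FreeGroup (S_H ⊕ S_K) ⧸ N :=
    QuotientGroup.mk' N with hqdef
  have hqker : ∀ u, q u = 1 ↔ u ∈ N := fun u => QuotientGroup.eq_one_iff u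
  set ψb : FreeGroup (S_H ⊕ S_K) ⧸ N →* G :=
    QuotientGroup.lift N ψ (fun u hu => hNle hu) with hψbdef
  have hψb : ∀ u, ψb (q u) = ψ u := fun u => rfl
  -- κ : K →* Q
  have hKkill : ∀ s ∈ π_K.ker, (q.comp jK) s = 1 := by
    intro s hs
    rw [hRK] at hs
    refine Subgroup.normalClosure_le_normal (N := (q.comp jK).ker) ?_ hs
    intro t ht
    have : jK t ∈ N := Subgroup.subset_normalClosure (by
      exact Set.mem_union_right _ ⟨t, ht, rfl⟩)
    simpa [MonoidHom.mem_ker, hqker] using this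
  set e : FreeGroup S_K ⧸ π_K.ker ≃* K :=
    QuotientGroup.quotientKerEquivOfSurjective π_K hπK with hedef
  set κ : K →* FreeGroup (S_H ⊕ S_K) ⧸ N :=
    (QuotientGroup.lift π_K.ker (q.comp jK) hKkill).comp e.symm.toMonoidHom
    with hκdef
  have hκ : ∀ s : FreeGroup S_K, κ (π_K s) = q (jK s) := by
    intro s
    have he : e.symm (π_K s) = QuotientGroup.mk s := by
      apply e.injective
      simp [hedef]
      rfl
    simp [hκdef, he]
    rfl
  have hψκ : ∀ k : K, ψb (κ k) = ι k := by
    intro k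
    obtain ⟨s, rfl⟩ := hπK k
    rw [hκ, hψb, hψK]
  -- the automorphisms γ x of K
  set γ : S_H → (K ≃* K) := fun x =>
    ((MonoidHom.ofInjective hι_inj).trans (MulAut.conjNormal (σ x))).trans
      (MonoidHom.ofInjective hι_inj).symm with hγdef
  have hγ : ∀ x k, ι (γ x k) = σ x * ι k * (σ x)⁻¹ := by
    intro x k
    show ι ((MonoidHom.ofInjective hι_inj).symm
      (MulAut.conjNormal (σ x) (MonoidHom.ofInjective hι_inj k))) = _
    rw [MonoidHom.apply_ofInjective_symm, MulAut.conjNormal_apply,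
      MonoidHom.ofInjective_apply]
  have hγgen : ∀ x y, γ x (π_K (FreeGroup.of y)) = π_K (v x y) := by
    intro x y
    apply hι_inj
    rw [hγ, hv]
  -- conjugation of κ-range by generators
  have hrel2 : ∀ x y, q (FreeGroup.of (Sum.inl x)) * q (jK (FreeGroup.of y)) *
      (q (FreeGroup.of (Sum.inl x)))⁻¹ = q (jK (v x y)) := by
    intro x y
    have hm : (FreeGroup.of (Sum.inl x) * FreeGroup.of (Sum.inr y) *
        (FreeGroup.of (Sum.inl x))⁻¹ * (jK (v x y))⁻¹) ∈ N :=
      Subgroup.subset_normalClosure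
        (Set.mem_union_left _ (Set.mem_union_right _ ⟨x, y, rfl⟩))
    have h1 := (hqker _).2 hm
    have hofy : jK (FreeGroup.of y) = FreeGroup.of (Sum.inr y) := FreeGroup.map.of
    rw [map_mul, map_mul, map_mul, map_inv, map_inv, mul_inv_eq_one] at h1
    rw [hofy, h1]
  have hconj_gen : ∀ (x : S_H) (k : K),
      q (FreeGroup.of (Sum.inl x)) * κ k * (q (FreeGroup.of (Sum.inl x)))⁻¹ =
        κ (γ x k) := by
    intro x k
    obtain ⟨s, rfl⟩ := hπK k
    set c := q (FreeGroup.of (Sum.inl x)) with hc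
    have key : (MulAut.conj c).toMonoidHom.comp (κ.comp π_K) =
        κ.comp ((γ x).toMonoidHom.comp π_K) := by
      refine FreeGroup.ext_hom _ _ fun y => ?_
      simp only [MonoidHom.comp_apply, MulEquiv.coe_toMonoidHom, MulAut.conj_apply]
      rw [hκ, hrel2, hγgen, hκ]
    have := DFunLike.congr_fun key s
    simpa using this
  have hconj : ∀ (a : FreeGroup S_H) (k : K), ∃ k' : K,
      q (jH a) * κ k * (q (jH a))⁻¹ = κ k' := by
    intro a
    induction a using FreeGroup.induction_on with
    | C1 => intro k; exact ⟨k, by simp⟩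
    | of x =>
      intro k
      refine ⟨γ x k, ?_⟩
      have hx : jH (FreeGroup.of x) = FreeGroup.of (Sum.inl x) := FreeGroup.map.of
      rw [hx]; exact hconj_gen x k
    | inv_of x _ =>
      intro k
      refine ⟨(γ x).symm k, ?_⟩
      have hx : jH (FreeGroup.of x) = FreeGroup.of (Sum.inl x) := FreeGroup.map.of
      have h1 := hconj_gen x ((γ x).symm k)
      rw [MulEquiv.apply_symm_apply] at h1
      rw [map_inv, map_inv, hx, inv_inv, ← h1]
      group
    | mul a b ha hb =>
      intro k
      obtain ⟨k1, h1⟩ := hb k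
      obtain ⟨k2, h2⟩ := ha k1
      refine ⟨k2, ?_⟩
      rw [map_mul, map_mul, ← h2, ← h1]
      group
  -- normal form
  have hnf : ∀ u : FreeGroup (S_H ⊕ S_K), ∃ (a : FreeGroup S_H) (k : K),
      q u = q (jH a) * κ k := by
    intro u
    induction u using FreeGroup.induction_on with
    | C1 => exact ⟨1, 1, by simp⟩
    | of z =>
      rcases z with x | y
      · refine ⟨FreeGroup.of x, 1, ?_⟩
        have hx : jH (FreeGroup.of x) = FreeGroup.of (Sum.inl x) := FreeGroup.map.of
        rw [hx, map_one, mul_one]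
      · refine ⟨1, π_K (FreeGroup.of y), ?_⟩
        have hy : jK (FreeGroup.of y) = FreeGroup.of (Sum.inr y) := FreeGroup.map.of
        rw [hκ, hy, map_one, map_one, one_mul]
    | inv_of z hz =>
      obtain ⟨a, k, h⟩ := hz
      obtain ⟨k2, h2⟩ := hconj a k⁻¹
      refine ⟨a⁻¹, k2, ?_⟩
      rw [map_inv, h, ← h2, map_inv κ k, map_inv, map_inv]
      group
    | mul u u' hu hu' =>
      obtain ⟨a, k, h⟩ := hu
      obtain ⟨a', k', h'⟩ := hu'
      obtain ⟨k2, h2⟩ := hconj a'⁻¹ k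
      simp only [map_inv, inv_inv] at h2
      refine ⟨a * a', k2 * k', ?_⟩
      rw [map_mul, h, h', map_mul, map_mul κ k2 k', map_mul, ← h2]
      group
  -- jH of ker π_H lands in range of κ
  have hkerH : ∀ a ∈ π_H.ker, ∃ k0 : K, q (jH a) = κ k0 := by
    have hsub : π_H.ker ≤ Subgroup.comap (q.comp jH) κ.range := by
      rw [hRH]
      refine (Subgroup.closure_le _).2 ?_
      intro z hz
      rw [Group.mem_conjugatesOfSet_iff] at hz
      obtain ⟨r, hr, hcj⟩ := hz
      obtain ⟨c, hc⟩ := isConj_iff.1 hcj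
      have hrmem : q (jH r) ∈ κ.range := by
        have hm : (jH r * (jK (w ⟨r, hr⟩))⁻¹) ∈ N :=
          Subgroup.subset_normalClosure
            (Set.mem_union_left _ (Set.mem_union_left _ ⟨⟨r, hr⟩, rfl⟩))
        have h1 := (hqker _).2 hm
        rw [map_mul, map_inv, mul_inv_eq_one] at h1
        rw [h1, ← hκ]
        exact ⟨_, rfl⟩
      obtain ⟨k0, hk0⟩ := hrmem
      obtain ⟨k1, hk1⟩ := hconj c k0
      refine Subgroup.mem_comap.2 ?_
      show q (jH z) ∈ κ.range
      rw [← hc, map_mul, map_mul, map_mul, map_mul, map_inv, map_inv]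
      exact ⟨k1, by rw [← hk1, hk0]⟩
    intro a ha
    have := hsub ha
    rw [Subgroup.mem_comap] at this
    obtain ⟨k0, hk0⟩ := this
    exact ⟨k0, hk0.symm⟩
  -- kernel containment
  refine le_antisymm ?_ hNle
  intro u hu
  have hu1 : ψ u = 1 := hu
  obtain ⟨a, k, h⟩ := hnf u
  have h1 : φ a * ι k = 1 := by
    have : ψb (q u) = ψb (q (jH a) * κ k) := by rw [h]
    rw [hψb, hu1, map_mul, hψb, hψφ, hψκ] at this
    exact this.symm
  have h2 : a ∈ π_H.ker := by
    have h3 : ρ (φ a * ι k) = 1 := by rw [h1, map_one]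
    have h4 : ρ (ι k) = 1 := by
      have : ι k ∈ ρ.ker := by rw [hker]; exact ⟨k, rfl⟩
      exact this
    rw [map_mul, h4, mul_one, hρφ] at h3
    exact h3
  obtain ⟨k0, hk0⟩ := hkerH a h2
  have h5 : ι (k0 * k) = 1 := by
    have : ψb (q u) = ψb (κ k0 * κ k) := by rw [h, hk0]
    rw [hψb, hu1, ← map_mul, hψκ] at this
    exact this.symm
  have h6 : k0 * k = 1 := hι_inj (by rw [h5, map_one])
  have h7 : q u = 1 := by rw [h, hk0, ← map_mul, h6, map_one]
  exact (hqker u).1 h7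
end

section
/- Let l ≥ 4 and let A(D_l) be the Artin group of the Coxeter graph D_l. Then in A(D_l): Δ(x_2,…,x_{l−1})⁻¹ x_1⁻¹ x_2 Δ(x_2,…,x_{l−1}) · Δ(x_2,…,x_l)⁻¹ x_2⁻¹ x_1 Δ(x_2,…,x_l) = x_l · Δ(x_2,…,x_{l−1})⁻¹ x_1⁻¹ x_2 Δ(x_2,…,x_{l−1}) · x_l⁻¹. -/
namespace ArtinTypeD

/-- `altWord a b m` is the alternating word `prod(a,b,m) = abab⋯` of length `m`. -/
def altWord {α : Type*} (a b : α) : ℕ → FreeGroup α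
  | 0 => 1
  | k + 1 => FreeGroup.of a * altWord b a k

/-- The Coxeter matrix of the graph `D_l`; the `0`-based vertex `i : Fin l`
corresponds to the vertex `x_{i+1}` of `D_l`, so the edges (label `3`) are
`{x_1,x_3}`, `{x_2,x_3}` and `{x_i,x_{i+1}}` for `3 ≤ i ≤ l-1`; every other
pair of distinct vertices has label `2`. -/
def coxD (l : ℕ) (i j : Fin l) : ℕ :=
  if i = j then 1
  else if ((i : ℕ) = 0 ∧ (j : ℕ) = 2) ∨ ((j : ℕ) = 0 ∧ (i : ℕ) = 2) ∨
      (1 ≤ (i : ℕ) ∧ (i : ℕ) + 1 = (j : ℕ)) ∨ (1 ≤ (j : ℕ) ∧ (j : ℕ) + 1 = (i : ℕ)) then 3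
  else 2

/-- The Artin relators of `D_l`. -/
def relsD (l : ℕ) : Set (FreeGroup (Fin l)) :=
  {w | ∃ i j : Fin l, i ≠ j ∧ w = altWord i j (coxD l i j) * (altWord j i (coxD l i j))⁻¹}

/-- The Artin group `A(D_l)`. -/
abbrev AD (l : ℕ) := PresentedGroup (relsD l)

/-- The generator `x_i` of `A(D_l)` (`1`-indexed, junk value `1` out of range). -/
def x (l i : ℕ) : AD l :=
  if h : 1 ≤ i ∧ i ≤ l then PresentedGroup.of (⟨i - 1, by omega⟩ : Fin l) else 1

/-- `Δ(z_1,…,z_m) = (z_1⋯z_m)(z_1⋯z_{m-1})⋯(z_1z_2)z_1`. -/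
def deltaList {G : Type*} [Group G] (zs : List G) : G :=
  (((List.range zs.length).reverse).map fun k => (zs.take (k + 1)).prod).prod

/-- `Δ(x_a, x_{a+1}, …, x_b)` in `A(D_l)`. -/
def delta (l a b : ℕ) : AD l :=
  deltaList ((List.range (b + 1 - a)).map fun k => x l (a + k))

end ArtinTypeD

namespace ArtinTypeD

/-! ### Basic relations in `A(D_l)` -/

variable {l : ℕ}

theorem pg_rel (i j : Fin l) (hij : i ≠ j) :
    PresentedGroup.mk (relsD l) (altWord i j (coxD l i j)) =
      PresentedGroup.mk (relsD l) (altWord j i (coxD l i j)) := by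
  have hmem : altWord i j (coxD l i j) * (altWord j i (coxD l i j))⁻¹ ∈
      Subgroup.normalClosure (relsD l) :=
    Subgroup.subset_normalClosure ⟨i, j, hij, rfl⟩
  have h1 : PresentedGroup.mk (relsD l)
      (altWord i j (coxD l i j) * (altWord j i (coxD l i j))⁻¹) = 1 :=
    (QuotientGroup.eq_one_iff _).mpr hmem
  rw [map_mul, map_inv] at h1
  exact mul_inv_eq_one.mp h1

theorem pg_braid {i j : Fin l} (hij : i ≠ j) (h3 : coxD l i j = 3) :
    PresentedGroup.of (rels := relsD l) i * PresentedGroup.of j * PresentedGroup.of i =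
      PresentedGroup.of j * PresentedGroup.of i * PresentedGroup.of j := by
  have := pg_rel i j hij
  rw [h3] at this
  simp only [altWord, map_mul, map_one] at this
  simpa [PresentedGroup.of, mul_assoc] using this

theorem pg_comm {i j : Fin l} (hij : i ≠ j) (h2 : coxD l i j = 2) :
    PresentedGroup.of (rels := relsD l) i * PresentedGroup.of j =
      PresentedGroup.of j * PresentedGroup.of i := by
  have := pg_rel i j hij
  rw [h2] at this
  simp only [altWord, map_mul, map_one] at this
  simpa [PresentedGroup.of, mul_assoc] using this

/-- braid relation between adjacent `1`-based generators. -/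
theorem x_braid {i j : ℕ} (hi1 : 1 ≤ i) (hil : i ≤ l) (hj1 : 1 ≤ j) (hjl : j ≤ l)
    (hcond : (i = 1 ∧ j = 3) ∨ (j = 1 ∧ i = 3) ∨ (2 ≤ i ∧ j = i + 1) ∨ (2 ≤ j ∧ i = j + 1)) :
    x l i * x l j * x l i = x l j * x l i * x l j := by
  have hij : i ≠ j := by omega
  rw [x, x, dif_pos ⟨hi1, hil⟩, dif_pos ⟨hj1, hjl⟩]
  apply pg_braid
  · simp only [ne_eq, Fin.mk.injEq]; omega
  · rw [coxD, if_neg (by simp only [Fin.mk.injEq]; omega), if_pos]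
    simp only [Fin.val_mk]
    omega

/-- commutation relation between non-adjacent `1`-based generators. -/
theorem x_comm {i j : ℕ} (hi1 : 1 ≤ i) (hil : i ≤ l) (hj1 : 1 ≤ j) (hjl : j ≤ l)
    (hij : i ≠ j)
    (hcond : ¬((i = 1 ∧ j = 3) ∨ (j = 1 ∧ i = 3) ∨ (2 ≤ i ∧ j = i + 1) ∨ (2 ≤ j ∧ i = j + 1))) :
    x l i * x l j = x l j * x l i := by
  rw [x, x, dif_pos ⟨hi1, hil⟩, dif_pos ⟨hj1, hjl⟩]
  apply pg_comm
  · simp only [ne_eq, Fin.mk.injEq]; omega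
  · rw [coxD, if_neg (by simp only [Fin.mk.injEq]; omega), if_neg]
    simp only [Fin.val_mk]
    omega


/-! ### Chain products and the recursion for `delta` -/

theorem deltaList_concat {G : Type*} [Group G] (ws : List G) (w : G) :
    deltaList (ws ++ [w]) = (ws ++ [w]).prod * deltaList ws := by
  unfold deltaList
  have hlen : (ws ++ [w]).length = ws.length + 1 := by simp
  rw [hlen, List.range_succ, List.reverse_append]
  simp only [List.reverse_singleton, List.singleton_append, List.map_cons, List.prod_cons]
  congr 1
  · rw [List.take_of_length_le (by simp)]
  · congr 1
    apply List.map_congr_left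
    intro k hk
    have hk' : k < ws.length := by simpa using hk
    rw [List.take_append_of_le_length (by omega)]

/-- The product `x_a x_{a+1} ⋯ x_b`. -/
def cp (l a b : ℕ) : AD l := ((List.range' a (b + 1 - a)).map (x l)).prod

theorem delta_eq (b : ℕ) : delta l 2 b = deltaList ((List.range' 2 (b - 1)).map (x l)) := by
  rw [delta, List.range'_eq_map_range, List.map_map]
  have : b + 1 - 2 = b - 1 := by omega
  rw [this]
  rfl

theorem cp_nil {a b : ℕ} (h : b + 1 ≤ a) : cp l a b = 1 := by
  have : b + 1 - a = 0 := by omega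
  rw [cp, this]
  simp

theorem cp_concat {a b : ℕ} (h : a ≤ b + 1) : cp l a (b + 1) = cp l a b * x l (b + 1) := by
  have h1 : b + 1 + 1 - a = (b + 1 - a) + 1 := by omega
  have h2 : a + 1 * (b + 1 - a) = b + 1 := by omega
  rw [cp, h1, List.range'_concat, h2]
  simp [cp]

theorem cp_head {a b : ℕ} (h : a ≤ b) : cp l a b = x l a * cp l (a + 1) b := by
  have h1 : b + 1 - a = (b - a) + 1 := by omega
  have h2 : b + 1 - (a + 1) = b - a := by omega
  rw [cp, h1, List.range'_succ]
  simp [cp, h2]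

theorem delta_rec {m : ℕ} (h : 2 ≤ m) : delta l 2 m = cp l 2 m * delta l 2 (m - 1) := by
  obtain ⟨p, rfl⟩ : ∃ p, m = p + 2 := ⟨m - 2, by omega⟩
  have h1 : p + 2 - 1 = p + 1 := by omega
  have h2 : p + 2 + 1 - 2 = p + 1 := by omega
  have h3 : p + 2 - 1 - 1 + 1 - 1 = p := by omega
  rw [delta_eq, delta_eq, h1, List.range'_concat, List.map_append,
    List.map_singleton, deltaList_concat]
  congr 1
  · rw [cp, h2, List.range'_concat, List.map_append, List.map_singleton]


/-! ### The elements `g` and `r_m`, and commutation lemmas -/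

/-- `g = x_1⁻¹ x_2`. -/
def gg (l : ℕ) : AD l := (x l 1)⁻¹ * x l 2

/-- `r_m = (x_2⋯x_m)⁻¹ g (x_2⋯x_m)`. -/
def rr (l m : ℕ) : AD l := (cp l 2 m)⁻¹ * gg l * cp l 2 m

theorem rr_succ {p : ℕ} (hp : 1 ≤ p) :
    rr l (p + 1) = (x l (p + 1))⁻¹ * rr l p * x l (p + 1) := by
  rw [rr, rr, cp_concat (by omega)]
  group

theorem x_comm_cp : ∀ b k, b + 2 ≤ k → k ≤ l → x l k * cp l 2 b = cp l 2 b * x l k := by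
  intro b
  induction b with
  | zero =>
    intro k _ _
    rw [cp_nil (by omega)]
    simp
  | succ b ih =>
    intro k h1 h2
    by_cases hb : 1 ≤ b
    · rw [cp_concat (by omega), ← mul_assoc, ih k (by omega) h2, mul_assoc,
        x_comm (by omega) h2 (by omega) (by omega) (by omega) (by omega), ← mul_assoc]
    · have hb0 : b = 0 := by omega
      subst hb0
      rw [show (0 : ℕ) + 1 = 1 from rfl, cp_nil (by omega)]
      simp

theorem delta_small {m : ℕ} (h : m ≤ 1) : delta l 2 m = 1 := by
  rw [delta_eq]
  have h0 : m - 1 = 0 := by omega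
  rw [h0]
  simp [deltaList]

theorem x_comm_delta : ∀ m k, m + 2 ≤ k → k ≤ l → x l k * delta l 2 m = delta l 2 m * x l k := by
  intro m
  induction m using Nat.strong_induction_on with
  | _ m ih =>
    intro k h1 h2
    by_cases hm : 2 ≤ m
    · rw [delta_rec hm, ← mul_assoc, x_comm_cp m k (by omega) h2, mul_assoc,
        ih (m - 1) (by omega) k (by omega) h2, ← mul_assoc]
    · rw [delta_small (by omega)]
      simp

theorem x_comm_gg {k : ℕ} (h4 : 4 ≤ k) (hk : k ≤ l) : x l k * gg l = gg l * x l k := by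
  have c1 : Commute (x l k) (x l 1) :=
    x_comm (by omega) hk (by omega) (by omega) (by omega) (by omega)
  have c2 : Commute (x l k) (x l 2) :=
    x_comm (by omega) hk (by omega) (by omega) (by omega) (by omega)
  exact (c1.inv_right.mul_right c2).eq

theorem x_comm_rr : ∀ m, 2 ≤ m → ∀ k, m + 2 ≤ k → k ≤ l → x l k * rr l m = rr l m * x l k := by
  intro m hm
  induction m, hm using Nat.le_induction with
  | base =>
    intro k h1 h2
    have ccp : Commute (x l k) (cp l 2 2) := x_comm_cp 2 k h1 h2
    have cg : Commute (x l k) (gg l) := x_comm_gg h1 h2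
    exact ((ccp.inv_right.mul_right cg).mul_right ccp).eq
  | succ m hm ih =>
    intro k h1 h2
    have cx : Commute (x l k) (x l (m + 1)) :=
      x_comm (by omega) h2 (by omega) (by omega) (by omega) (by omega)
    have cr : Commute (x l k) (rr l m) := ih k (by omega) h2
    rw [rr_succ (by omega)]
    exact ((cx.inv_right.mul_right cr).mul_right cx).eq

/-! ### The shift property of the chain product -/

theorem cp_two_three : cp l 2 3 = x l 2 * (x l 3 * 1) := rfl

theorem shift : ∀ m, 3 ≤ m → m ≤ l → ∀ i, 2 ≤ i → i + 1 ≤ m →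
    cp l 2 m * x l i = x l (i + 1) * cp l 2 m := by
  intro m hm
  induction m, hm using Nat.le_induction with
  | base =>
    intro hml i hi2 hi3
    have hi : i = 2 := by omega
    subst hi
    have hb := x_braid (l := l) (i := 2) (j := 3) (by omega) (by omega) (by omega) (by omega)
      (by omega)
    rw [cp_two_three]
    calc x l 2 * (x l 3 * 1) * x l 2 = x l 2 * x l 3 * x l 2 := by group
      _ = x l 3 * x l 2 * x l 3 := hb
      _ = x l 3 * (x l 2 * (x l 3 * 1)) := by group
  | succ m hm ih =>
    intro hml i hi2 him
    by_cases hc : i + 1 ≤ m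
    · rw [cp_concat (by omega), mul_assoc,
        x_comm (i := m + 1) (j := i) (by omega) (by omega) (by omega) (by omega) (by omega)
          (by omega),
        ← mul_assoc, ih (by omega) i hi2 hc, mul_assoc]
    · obtain ⟨p, rfl⟩ : ∃ p, m = p + 1 := ⟨m - 1, by omega⟩
      have hp2 : 2 ≤ p := by omega
      have hi : i = p + 1 := by omega
      subst hi
      rw [cp_concat (by omega), cp_concat (by omega)]
      have hb := x_braid (l := l) (i := p + 1) (j := p + 2) (by omega) (by omega) (by omega)
        (by omega) (by omega)
      calc cp l 2 p * x l (p + 1) * x l (p + 2) * x l (p + 1)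
          = cp l 2 p * (x l (p + 1) * x l (p + 2) * x l (p + 1)) := by group
        _ = cp l 2 p * (x l (p + 2) * x l (p + 1) * x l (p + 2)) := by rw [hb]
        _ = (cp l 2 p * x l (p + 2)) * (x l (p + 1) * x l (p + 2)) := by group
        _ = (x l (p + 2) * cp l 2 p) * (x l (p + 1) * x l (p + 2)) := by
            rw [← x_comm_cp p (p + 2) (by omega) (by omega)]
        _ = x l (p + 2) * (cp l 2 p * x l (p + 1) * x l (p + 2)) := by group

theorem shift_cp {m : ℕ} (hm3 : 3 ≤ m) (hml : m ≤ l) : ∀ b, b + 1 ≤ m →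
    cp l 2 m * cp l 2 b = cp l 3 (b + 1) * cp l 2 m := by
  intro b
  induction b with
  | zero =>
    intro _
    rw [cp_nil (show 0 + 1 ≤ 2 by omega), cp_nil (show 0 + 1 + 1 ≤ 3 by omega)]
    simp
  | succ b ih =>
    intro hbm
    by_cases hb : 1 ≤ b
    · rw [cp_concat (show 2 ≤ b + 1 by omega), ← mul_assoc, ih (by omega), mul_assoc,
        shift m hm3 hml (b + 1) (by omega) (by omega), ← mul_assoc,
        ← cp_concat (show 3 ≤ b + 1 + 1 by omega)]
    · have hb0 : b = 0 := by omega
      subst hb0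
      rw [cp_nil (show 0 + 1 + 1 ≤ 2 by omega), cp_nil (show 0 + 1 + 1 + 1 ≤ 3 by omega)]
      simp


/-! ### Generic braid-relation helpers -/

section BraidHelpers
variable {G : Type*} [Group G] {u v : G}

theorem braid_rw1 (h : u * v * u = v * u * v) : u * v * u⁻¹ = v⁻¹ * u * v := by
  calc u * v * u⁻¹ = v⁻¹ * (v * u * v) * u⁻¹ := by group
    _ = v⁻¹ * (u * v * u) * u⁻¹ := by rw [h]
    _ = v⁻¹ * u * v := by group

theorem braid_inv (h : u * v * u = v * u * v) : u⁻¹ * v⁻¹ * u⁻¹ = v⁻¹ * u⁻¹ * v⁻¹ := by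
  rw [show u⁻¹ * v⁻¹ * u⁻¹ = (u * v * u)⁻¹ from by group, h]
  group

theorem braid_rw2 (h : u * v * u = v * u * v) : u * v⁻¹ * u⁻¹ = v⁻¹ * u⁻¹ * v := by
  rw [show u * v⁻¹ * u⁻¹ = (u * v * u⁻¹)⁻¹ from by group, braid_rw1 h]
  group

theorem braid_rw3 (h : u * v * u = v * u * v) : u⁻¹ * v⁻¹ * u = v * u⁻¹ * v⁻¹ := by
  calc u⁻¹ * v⁻¹ * u = v * (v⁻¹ * u⁻¹ * v⁻¹) * u := by group
    _ = v * (u⁻¹ * v⁻¹ * u⁻¹) * u := by rw [← braid_inv h]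
    _ = v * u⁻¹ * v⁻¹ := by group

end BraidHelpers

/-! ### The key identity `T(m)` -/

theorem cp_two_two : cp l 2 2 = x l 2 := by
  rw [show cp l 2 2 = x l 2 * 1 from rfl, mul_one]

theorem x2_comm_gg (h2 : 2 ≤ l) : x l 2 * gg l = gg l * x l 2 := by
  have hab : x l 1 * x l 2 = x l 2 * x l 1 :=
    x_comm (by omega) (by omega) (by omega) (by omega) (by omega) (by omega)
  have hba : x l 2 * (x l 1)⁻¹ = (x l 1)⁻¹ * x l 2 := by
    rw [show x l 2 * (x l 1)⁻¹ = (x l 1)⁻¹ * (x l 1 * x l 2) * (x l 1)⁻¹ from by group, hab]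
    group
  rw [gg]
  calc x l 2 * ((x l 1)⁻¹ * x l 2) = (x l 2 * (x l 1)⁻¹) * x l 2 := by group
    _ = ((x l 1)⁻¹ * x l 2) * x l 2 := by rw [hba]

theorem x2_conj_gg (h2 : 2 ≤ l) : (x l 2)⁻¹ * gg l * x l 2 = gg l := by
  rw [mul_assoc, ← x2_comm_gg h2, ← mul_assoc, inv_mul_cancel, one_mul]

theorem TT : ∀ m, 2 ≤ m → m + 1 ≤ l →
    rr l (m + 1) * (cp l 2 m)⁻¹ * (rr l (m + 1))⁻¹ * cp l 2 m = rr l m := by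
  intro m hm
  induction m, hm using Nat.le_induction with
  | base =>
    intro hml
    norm_num
    have hac : x l 1 * x l 3 * x l 1 = x l 3 * x l 1 * x l 3 :=
      x_braid (by omega) (by omega) (by omega) (by omega) (by omega)
    have hbc : x l 2 * x l 3 * x l 2 = x l 3 * x l 2 * x l 3 :=
      x_braid (by omega) (by omega) (by omega) (by omega) (by omega)
    have c23 : cp l 2 3 = x l 2 * x l 3 := by rw [cp_two_three, mul_one]
    have hr2 : rr l 2 = gg l := by rw [rr, cp_two_two]; exact x2_conj_gg (by omega)
    have hr3 : rr l 3 = (x l 3)⁻¹ * gg l * x l 3 := by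
      rw [rr, c23]
      calc (x l 2 * x l 3)⁻¹ * gg l * (x l 2 * x l 3)
          = (x l 3)⁻¹ * ((x l 2)⁻¹ * gg l * x l 2) * x l 3 := by group
        _ = (x l 3)⁻¹ * gg l * x l 3 := by rw [x2_conj_gg (by omega)]
    rw [hr3, hr2, cp_two_two, gg]
    have e0 : x l 2 * x l 3 * (x l 2)⁻¹ = (x l 3)⁻¹ * x l 2 * x l 3 := braid_rw1 hbc
    have e3 : (x l 1)⁻¹ * (x l 3)⁻¹ * x l 1 = x l 3 * (x l 1)⁻¹ * (x l 3)⁻¹ := braid_rw3 hac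
    calc (x l 3)⁻¹ * ((x l 1)⁻¹ * x l 2) * x l 3 * (x l 2)⁻¹ *
          ((x l 3)⁻¹ * ((x l 1)⁻¹ * x l 2) * x l 3)⁻¹ * x l 2
        = (x l 3)⁻¹ * (x l 1)⁻¹ * (x l 2 * x l 3 * (x l 2)⁻¹) *
            ((x l 3)⁻¹ * (x l 2)⁻¹ * (x l 1 * (x l 3 * x l 2))) := by group
      _ = (x l 3)⁻¹ * (x l 1)⁻¹ * ((x l 3)⁻¹ * x l 2 * x l 3) *
            ((x l 3)⁻¹ * (x l 2)⁻¹ * (x l 1 * (x l 3 * x l 2))) := by rw [e0]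
      _ = (x l 3)⁻¹ * ((x l 1)⁻¹ * (x l 3)⁻¹ * x l 1) * (x l 3 * x l 2) := by group
      _ = (x l 3)⁻¹ * (x l 3 * (x l 1)⁻¹ * (x l 3)⁻¹) * (x l 3 * x l 2) := by rw [e3]
      _ = (x l 1)⁻¹ * x l 2 := by group
  | succ m hm ih =>
    intro hml
    have hs : rr l (m + 1) = (x l (m + 1))⁻¹ * rr l m * x l (m + 1) := rr_succ (by omega)
    have hrm : rr l (m + 1 + 1) = (x l (m + 1 + 1))⁻¹ * rr l (m + 1) * x l (m + 1 + 1) :=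
      rr_succ (by omega)
    have hC : cp l 2 (m + 1) = cp l 2 m * x l (m + 1) := cp_concat (by omega)
    have hKe : x l (m + 2) * cp l 2 m = cp l 2 m * x l (m + 2) :=
      x_comm_cp m (m + 2) (by omega) (by omega)
    have hte : x l (m + 2) * rr l m = rr l m * x l (m + 2) :=
      x_comm_rr m hm (m + 2) (by omega) (by omega)
    have hbraid : x l (m + 1) * x l (m + 2) * x l (m + 1) =
        x l (m + 2) * x l (m + 1) * x l (m + 2) :=
      x_braid (by omega) (by omega) (by omega) (by omega) (by omega)
    have hT := ih (by omega)
    -- abbreviations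
    set d := x l (m + 1) with hd
    set t := rr l m with ht
    set K := cp l 2 m with hK
    have he2 : x l (m + 1 + 1) = x l (m + 2) := by norm_num
    rw [hrm, hC, he2]
    set e := x l (m + 2) with he
    set s := rr l (m + 1) with hsdef
    have h7 : K⁻¹ * s⁻¹ * K = s⁻¹ * t := by
      calc K⁻¹ * s⁻¹ * K = s⁻¹ * (s * K⁻¹ * s⁻¹ * K) := by group
        _ = s⁻¹ * t := by rw [hT]
    have hKe2 : K⁻¹ * e⁻¹ = e⁻¹ * K⁻¹ := by
      rw [show K⁻¹ * e⁻¹ = (e * K)⁻¹ from by group, hKe]; group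
    have hT1 : e * d⁻¹ * e⁻¹ = d⁻¹ * e⁻¹ * d := braid_rw2 hbraid.symm
    have hsd : s * d⁻¹ = d⁻¹ * t := by rw [hs]; group
    have hds : d * s⁻¹ = t⁻¹ * d := by rw [hs]; group
    have hte2 : t * e⁻¹ * t⁻¹ = e⁻¹ := by
      rw [show t * e⁻¹ * t⁻¹ = e⁻¹ * (e * t) * e⁻¹ * t⁻¹ from by group, hte]; group
    have hbinv : e⁻¹ * d⁻¹ * e⁻¹ = d⁻¹ * e⁻¹ * d⁻¹ := braid_inv hbraid.symm
    calc e⁻¹ * s * e * (K * d)⁻¹ * (e⁻¹ * s * e)⁻¹ * (K * d)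
        = e⁻¹ * s * e * d⁻¹ * (K⁻¹ * e⁻¹) * s⁻¹ * (e * K) * d := by group
      _ = e⁻¹ * s * e * d⁻¹ * (e⁻¹ * K⁻¹) * s⁻¹ * (K * e) * d := by rw [hKe2, hKe]
      _ = e⁻¹ * s * (e * d⁻¹ * e⁻¹) * (K⁻¹ * s⁻¹ * K) * (e * d) := by group
      _ = e⁻¹ * s * (d⁻¹ * e⁻¹ * d) * (s⁻¹ * t) * (e * d) := by rw [hT1, h7]
      _ = e⁻¹ * (s * d⁻¹) * e⁻¹ * (d * s⁻¹) * (t * e) * d := by group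
      _ = e⁻¹ * (d⁻¹ * t) * e⁻¹ * (t⁻¹ * d) * (t * e) * d := by rw [hsd, hds]
      _ = e⁻¹ * (d⁻¹ * t) * e⁻¹ * (t⁻¹ * d) * (e * t) * d := by rw [← hte]
      _ = e⁻¹ * d⁻¹ * (t * e⁻¹ * t⁻¹) * (d * (e * (t * d))) := by group
      _ = e⁻¹ * d⁻¹ * e⁻¹ * (d * (e * (t * d))) := by rw [hte2]
      _ = (e⁻¹ * d⁻¹ * e⁻¹) * (d * (e * (t * d))) := by group
      _ = (d⁻¹ * e⁻¹ * d⁻¹) * (d * (e * (t * d))) := by rw [hbinv]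
      _ = d⁻¹ * t * d := by group
      _ = s := by rw [hs]


end ArtinTypeD

open ArtinTypeD in
/-- The first equality of **Lemma 3.5** of Labruère–Paris: in `A(D_l)` (`l ≥ 4`),
`Δ(x_2,…,x_{l−1})⁻¹ x_1⁻¹ x_2 Δ(x_2,…,x_{l−1}) · Δ(x_2,…,x_l)⁻¹ x_2⁻¹ x_1 Δ(x_2,…,x_l)
  = x_l · Δ(x_2,…,x_{l−1})⁻¹ x_1⁻¹ x_2 Δ(x_2,…,x_{l−1}) · x_l⁻¹`. -/
theorem lemma_3_5_first (l : ℕ) (hl : 4 ≤ l) :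
    (delta l 2 (l - 1))⁻¹ * (x l 1)⁻¹ * x l 2 * delta l 2 (l - 1) *
      ((delta l 2 l)⁻¹ * (x l 2)⁻¹ * x l 1 * delta l 2 l) =
    x l l * ((delta l 2 (l - 1))⁻¹ * (x l 1)⁻¹ * x l 2 * delta l 2 (l - 1)) * (x l l)⁻¹ := by
  -- notation
  have hDrec : delta l 2 l = cp l 2 l * delta l 2 (l - 1) := delta_rec (by omega)
  have hD1rec : delta l 2 (l - 1) = cp l 2 (l - 1) * delta l 2 (l - 1 - 1) :=
    delta_rec (by omega)
  have hcom : x l l * delta l 2 (l - 1 - 1) = delta l 2 (l - 1 - 1) * x l l :=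
    x_comm_delta (l - 1 - 1) l (by omega) le_rfl
  have hCrec : cp l 2 l = cp l 2 (l - 1) * x l l := by
    have h := cp_concat (l := l) (a := 2) (b := l - 1) (by omega)
    rw [show l - 1 + 1 = l from by omega] at h
    exact h
  -- `S'(l)`:  r_l C_l⁻¹ r_l⁻¹ C_l = r_{l-1}
  have hTl : rr l l * (cp l 2 (l - 1))⁻¹ * (rr l l)⁻¹ * cp l 2 (l - 1) = rr l (l - 1) := by
    have h := TT (l := l) (l - 1) (by omega) (by omega)
    rw [show l - 1 + 1 = l from by omega] at h
    exact h
  have hhead : cp l 2 l = x l 2 * cp l 3 l := cp_head (by omega)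
  have hr_alt : rr l l = (cp l 3 l)⁻¹ * gg l * cp l 3 l := by
    rw [rr, hhead]
    calc (x l 2 * cp l 3 l)⁻¹ * gg l * (x l 2 * cp l 3 l)
        = (cp l 3 l)⁻¹ * ((x l 2)⁻¹ * gg l * x l 2) * cp l 3 l := by group
      _ = (cp l 3 l)⁻¹ * gg l * cp l 3 l := by rw [x2_conj_gg (by omega)]
  have hshift : cp l 2 l * cp l 2 (l - 1) = cp l 3 l * cp l 2 l := by
    have h := shift_cp (l := l) (m := l) (by omega) le_rfl (l - 1) (by omega)
    rw [show l - 1 + 1 = l from by omega] at h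
    exact h
  have hPC : (cp l 2 l)⁻¹ * (cp l 3 l * cp l 2 l) = cp l 2 (l - 1) := by
    rw [← hshift]; group
  have hB : (cp l 2 l)⁻¹ * rr l l * cp l 2 l =
      (cp l 2 (l - 1))⁻¹ * rr l l * cp l 2 (l - 1) := by
    calc (cp l 2 l)⁻¹ * rr l l * cp l 2 l
        = ((cp l 2 l)⁻¹ * (cp l 3 l * cp l 2 l))⁻¹ *
            ((cp l 2 l)⁻¹ * gg l * cp l 2 l) *
            ((cp l 2 l)⁻¹ * (cp l 3 l * cp l 2 l)) := by rw [hr_alt]; group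
      _ = (cp l 2 (l - 1))⁻¹ * ((cp l 2 l)⁻¹ * gg l * cp l 2 l) * cp l 2 (l - 1) := by
          rw [hPC]
      _ = (cp l 2 (l - 1))⁻¹ * rr l l * cp l 2 (l - 1) := rfl
  have hSp : rr l l * (cp l 2 l)⁻¹ * (rr l l)⁻¹ * cp l 2 l = rr l (l - 1) := by
    have hBinv : (cp l 2 l)⁻¹ * (rr l l)⁻¹ * cp l 2 l =
        (cp l 2 (l - 1))⁻¹ * (rr l l)⁻¹ * cp l 2 (l - 1) := by
      rw [show (cp l 2 l)⁻¹ * (rr l l)⁻¹ * cp l 2 l =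
        ((cp l 2 l)⁻¹ * rr l l * cp l 2 l)⁻¹ from by group, hB]
      group
    calc rr l l * (cp l 2 l)⁻¹ * (rr l l)⁻¹ * cp l 2 l
        = rr l l * ((cp l 2 l)⁻¹ * (rr l l)⁻¹ * cp l 2 l) := by group
      _ = rr l l * ((cp l 2 (l - 1))⁻¹ * (rr l l)⁻¹ * cp l 2 (l - 1)) := by rw [hBinv]
      _ = rr l l * (cp l 2 (l - 1))⁻¹ * (rr l l)⁻¹ * cp l 2 (l - 1) := by group
      _ = rr l (l - 1) := hTl
  -- conjugating identity for the `D`-part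
  have hE : delta l 2 (l - 1) * x l l * (delta l 2 (l - 1))⁻¹ =
      cp l 2 (l - 1) * x l l * (cp l 2 (l - 1))⁻¹ := by
    rw [hD1rec]
    calc cp l 2 (l - 1) * delta l 2 (l - 1 - 1) * x l l *
          (cp l 2 (l - 1) * delta l 2 (l - 1 - 1))⁻¹
        = cp l 2 (l - 1) * (delta l 2 (l - 1 - 1) * x l l) *
            (delta l 2 (l - 1 - 1))⁻¹ * (cp l 2 (l - 1))⁻¹ := by group
      _ = cp l 2 (l - 1) * (x l l * delta l 2 (l - 1 - 1)) *
            (delta l 2 (l - 1 - 1))⁻¹ * (cp l 2 (l - 1))⁻¹ := by rw [hcom]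
      _ = cp l 2 (l - 1) * x l l * (cp l 2 (l - 1))⁻¹ := by group
  -- the key identity
  have key : gg l * (cp l 2 l)⁻¹ * (gg l)⁻¹ * cp l 2 l =
      (delta l 2 (l - 1) * x l l * (delta l 2 (l - 1))⁻¹) * gg l *
        (delta l 2 (l - 1) * x l l * (delta l 2 (l - 1))⁻¹)⁻¹ := by
    have hSp' : ((cp l 2 l)⁻¹ * gg l * cp l 2 l) * (cp l 2 l)⁻¹ *
        ((cp l 2 l)⁻¹ * gg l * cp l 2 l)⁻¹ * cp l 2 l =
        (cp l 2 (l - 1))⁻¹ * gg l * cp l 2 (l - 1) := hSp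
    calc gg l * (cp l 2 l)⁻¹ * (gg l)⁻¹ * cp l 2 l
        = cp l 2 l * (((cp l 2 l)⁻¹ * gg l * cp l 2 l) * (cp l 2 l)⁻¹ *
            ((cp l 2 l)⁻¹ * gg l * cp l 2 l)⁻¹ * cp l 2 l) * (cp l 2 l)⁻¹ := by group
      _ = cp l 2 l * ((cp l 2 (l - 1))⁻¹ * gg l * cp l 2 (l - 1)) * (cp l 2 l)⁻¹ := by
          rw [hSp']
      _ = (cp l 2 (l - 1) * x l l) * ((cp l 2 (l - 1))⁻¹ * gg l * cp l 2 (l - 1)) *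
            (cp l 2 (l - 1) * x l l)⁻¹ := by rw [← hCrec]
      _ = (cp l 2 (l - 1) * x l l * (cp l 2 (l - 1))⁻¹) * gg l *
            (cp l 2 (l - 1) * x l l * (cp l 2 (l - 1))⁻¹)⁻¹ := by group
      _ = (delta l 2 (l - 1) * x l l * (delta l 2 (l - 1))⁻¹) * gg l *
            (delta l 2 (l - 1) * x l l * (delta l 2 (l - 1))⁻¹)⁻¹ := by rw [← hE]
  -- conclusion
  have key' := key
  simp only [gg] at key'
  calc (delta l 2 (l - 1))⁻¹ * (x l 1)⁻¹ * x l 2 * delta l 2 (l - 1) *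
        ((delta l 2 l)⁻¹ * (x l 2)⁻¹ * x l 1 * delta l 2 l)
      = (delta l 2 (l - 1))⁻¹ * ((x l 1)⁻¹ * x l 2 * (cp l 2 l)⁻¹ *
          ((x l 1)⁻¹ * x l 2)⁻¹ * cp l 2 l) * delta l 2 (l - 1) := by rw [hDrec]; group
    _ = (delta l 2 (l - 1))⁻¹ *
          ((delta l 2 (l - 1) * x l l * (delta l 2 (l - 1))⁻¹) * ((x l 1)⁻¹ * x l 2) *
            (delta l 2 (l - 1) * x l l * (delta l 2 (l - 1))⁻¹)⁻¹) * delta l 2 (l - 1) := by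
        rw [← key']
    _ = x l l * ((delta l 2 (l - 1))⁻¹ * (x l 1)⁻¹ * x l 2 * delta l 2 (l - 1)) *
          (x l l)⁻¹ := by group
end

section
/- Let l ≥ 4 and let A(D_l) be the Artin group of the Coxeter graph D_l. Then in A(D_l): Δ(x_2,…,x_l)⁻¹ x_2⁻¹ x_1 Δ(x_2,…,x_l) · Δ(x_2,…,x_{l−1})⁻¹ x_2⁻¹ x_1 Δ(x_2,…,x_{l−1}) = x_{l−1} · Δ(x_2,…,x_l)⁻¹ x_2⁻¹ x_1 Δ(x_2,…,x_l) · x_{l−1}⁻¹. -/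
namespace ArtinTypeD

-- auxiliary lemmas


variable {l : ℕ}

lemma rel_eq {i j : Fin l} (hij : i ≠ j) :
    PresentedGroup.mk (relsD l) (altWord i j (coxD l i j)) =
      PresentedGroup.mk (relsD l) (altWord j i (coxD l i j)) := by
  have hmem : altWord i j (coxD l i j) * (altWord j i (coxD l i j))⁻¹ ∈
      Subgroup.normalClosure (relsD l) :=
    Subgroup.subset_normalClosure ⟨i, j, hij, rfl⟩
  have h1 : PresentedGroup.mk (relsD l)
      (altWord i j (coxD l i j) * (altWord j i (coxD l i j))⁻¹) = 1 :=
    (QuotientGroup.eq_one_iff _).mpr hmem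
  rw [map_mul, map_inv, mul_inv_eq_one] at h1
  exact h1

lemma braid_of {i j : Fin l} (hij : i ≠ j) (h3 : coxD l i j = 3) :
    (PresentedGroup.of i : AD l) * PresentedGroup.of j * PresentedGroup.of i =
      PresentedGroup.of j * PresentedGroup.of i * PresentedGroup.of j := by
  have := rel_eq hij
  rw [h3] at this
  simp only [altWord, map_mul, mul_one, map_one] at this
  simpa [PresentedGroup.of, mul_assoc] using this

lemma comm_of {i j : Fin l} (hij : i ≠ j) (h2 : coxD l i j = 2) :
    (PresentedGroup.of i : AD l) * PresentedGroup.of j =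
      PresentedGroup.of j * PresentedGroup.of i := by
  have := rel_eq hij
  rw [h2] at this
  simp only [altWord, map_mul, mul_one, map_one] at this
  simpa [PresentedGroup.of, mul_assoc] using this

lemma x_eq {a : ℕ} (h1 : 1 ≤ a) (h2 : a ≤ l) :
    x l a = PresentedGroup.of (⟨a - 1, by omega⟩ : Fin l) := dif_pos ⟨h1, h2⟩

lemma braid13 (h : 3 ≤ l) : x l 1 * x l 3 * x l 1 = x l 3 * x l 1 * x l 3 := by
  rw [x_eq (by omega) (by omega), x_eq (by omega) (by omega)]
  apply braid_of
  · simp [Fin.ne_iff_vne]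
  · unfold coxD
    rw [if_neg (by simp [Fin.ext_iff]), if_pos (by simp)]

lemma braid_s (i : ℕ) (h2 : 2 ≤ i) (h : i + 1 ≤ l) :
    x l i * x l (i + 1) * x l i = x l (i + 1) * x l i * x l (i + 1) := by
  rw [x_eq (by omega) (by omega), x_eq (by omega) (by omega)]
  apply braid_of
  · simp only [Fin.ne_iff_vne]; omega
  · unfold coxD
    rw [if_neg (by simp only [Fin.ext_iff]; omega), if_pos (by simp only []; omega)]

lemma comm12 (h : 2 ≤ l) : x l 1 * x l 2 = x l 2 * x l 1 := by
  rw [x_eq (by omega) (by omega), x_eq (by omega) (by omega)]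
  apply comm_of
  · simp only [Fin.ne_iff_vne]; omega
  · unfold coxD
    rw [if_neg (by simp only [Fin.ext_iff]; omega), if_neg (by simp only []; omega)]

lemma comm_far (i j : ℕ) (h1 : 1 ≤ i) (h2 : i + 2 ≤ j) (h3 : j ≤ l)
    (hne : ¬(i = 1 ∧ j = 3)) : x l i * x l j = x l j * x l i := by
  rw [x_eq (by omega) (by omega), x_eq (by omega) (by omega)]
  apply comm_of
  · simp only [Fin.ne_iff_vne]; omega
  · unfold coxD
    rw [if_neg (by simp only [Fin.ext_iff]; omega), if_neg (by simp only []; omega)]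


lemma deltaList_append {G : Type*} [Group G] (L : List G) (z : G) :
    deltaList (L ++ [z]) = (L ++ [z]).prod * deltaList L := by
  unfold deltaList
  rw [List.length_append, List.length_singleton, List.range_succ, List.reverse_append,
    List.reverse_singleton, List.singleton_append, List.map_cons, List.prod_cons]
  congr 1
  · rw [List.take_of_length_le (by simp)]
  · apply congrArg
    apply List.map_congr_left
    intro k hk
    rw [List.mem_reverse, List.mem_range] at hk
    rw [List.take_append_of_le_length (by omega)]

/-- `Cw l a n = x_a x_{a+1} ⋯ x_{a+n-1}`. -/
def Cw (l a : ℕ) : ℕ → AD l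
  | 0 => 1
  | n + 1 => Cw l a n * x l (a + n)

/-- `Dw l a n = x_{a+n-1} ⋯ x_{a+1} x_a`. -/
def Dw (l a : ℕ) : ℕ → AD l
  | 0 => 1
  | n + 1 => x l (a + n) * Dw l a n

/-- `Del l a n = Δ(x_a, …, x_{a+n-1})`. -/
def Del (l a : ℕ) : ℕ → AD l
  | 0 => 1
  | n + 1 => Cw l a (n + 1) * Del l a n

lemma prod_range_map (a n : ℕ) :
    ((List.range n).map fun k => x l (a + k)).prod = Cw l a n := by
  induction n with
  | zero => rfl
  | succ m ih => rw [List.range_succ, List.map_append, List.prod_append]; simp [Cw, ih]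

lemma deltaList_range_map (a n : ℕ) :
    deltaList ((List.range n).map fun k => x l (a + k)) = Del l a n := by
  induction n with
  | zero => rfl
  | succ m ih =>
    rw [List.range_succ, List.map_append]
    simp only [List.map_cons, List.map_nil]
    rw [deltaList_append, ih,
      show List.map (fun k => x l (a + k)) (List.range m) ++ [x l (a + m)]
          = List.map (fun k => x l (a + k)) (List.range (m + 1)) by
        rw [List.range_succ, List.map_append]; rfl,
      prod_range_map]
    rfl

lemma delta_eq_s3 (a b : ℕ) : delta l a b = Del l a (b + 1 - a) := deltaList_range_map a _


lemma braid_s' (i : ℕ) (h2 : 2 ≤ i) (h : i + 1 ≤ l) :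
    x l i * (x l (i + 1) * x l i) = x l (i + 1) * (x l i * x l (i + 1)) := by
  rw [← mul_assoc, ← mul_assoc, braid_s i h2 h]

lemma x_congr {a b : ℕ} (h : a = b) : x l a = x l b := by rw [h]

lemma braid_w (i : ℕ) (h2 : 2 ≤ i) (h : i + 1 ≤ l) (t : AD l) :
    x l i * (x l (i + 1) * (x l i * t)) = x l (i + 1) * (x l i * (x l (i + 1) * t)) := by
  rw [← mul_assoc, ← mul_assoc, braid_s i h2 h]
  simp only [mul_assoc]

lemma comm_big_Cw (a n j : ℕ) (ha : 2 ≤ a) (h : a + n + 1 ≤ j) (hj : j ≤ l) :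
    x l j * Cw l a n = Cw l a n * x l j := by
  induction n with
  | zero => simp [Cw]
  | succ m ih =>
    have hcomm : x l (a + m) * x l j = x l j * x l (a + m) :=
      comm_far (a + m) j (by omega) (by omega) hj (by omega)
    rw [Cw, ← mul_assoc, ih (by omega), mul_assoc, ← hcomm, ← mul_assoc]

lemma comm_small_Cw (c n : ℕ) (hc1 : 1 ≤ c) (hc2 : c ≤ 2) (h : 3 + n ≤ l) :
    x l c * Cw l 4 n = Cw l 4 n * x l c := by
  induction n with
  | zero => simp [Cw]
  | succ m ih =>
    have hcomm : x l c * x l (4 + m) = x l (4 + m) * x l c :=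
      comm_far c (4 + m) (by omega) (by omega) (by omega) (by omega)
    rw [Cw, ← mul_assoc, ih (by omega), mul_assoc, hcomm, ← mul_assoc]

lemma comm_big_Dw (n j : ℕ) (h : n + 3 ≤ j) (hj : j ≤ l) :
    x l j * Dw l 2 n = Dw l 2 n * x l j := by
  induction n with
  | zero => simp [Dw]
  | succ m ih =>
    have hcomm : x l (2 + m) * x l j = x l j * x l (2 + m) :=
      comm_far (2 + m) j (by omega) (by omega) hj (by omega)
    rw [Dw, ← mul_assoc, ← hcomm, mul_assoc, ih (by omega), ← mul_assoc]

lemma comm_big_Del (n j : ℕ) (h : n + 3 ≤ j) (hj : j ≤ l) :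
    x l j * Del l 2 n = Del l 2 n * x l j := by
  induction n with
  | zero => simp [Del]
  | succ m ih =>
    rw [Del, ← mul_assoc, comm_big_Cw 2 (m + 1) j (by omega) (by omega) hj,
      mul_assoc, ih (by omega), ← mul_assoc]

lemma Cw_cons (a n : ℕ) : Cw l a (n + 1) = x l a * Cw l (a + 1) n := by
  induction n with
  | zero => simp [Cw]
  | succ m ih =>
    rw [Cw, ih, Cw, mul_assoc, x_congr (show a + (m + 1) = a + 1 + m by omega)]

lemma Cw_mul (i n : ℕ) (h2 : 2 ≤ i) (hin : i ≤ n) (hnl : n + 1 ≤ l) :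
    Cw l 2 n * x l i = x l (i + 1) * Cw l 2 n := by
  induction n with
  | zero => omega
  | succ m ih =>
    rcases Nat.lt_or_ge i (m + 1) with hlt | hge
    · -- i ≤ m
      have hcomm : x l (2 + m) * x l i = x l i * x l (2 + m) :=
        (comm_far i (2 + m) (by omega) (by omega) (by omega) (by omega)).symm
      rw [Cw, mul_assoc, hcomm, ← mul_assoc, ih (by omega) (by omega), mul_assoc]
    · -- i = m + 1, and m ≥ 1
      have him : i = m + 1 := by omega
      obtain ⟨k, rfl⟩ : ∃ k, m = k + 1 := ⟨m - 1, by omega⟩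
      subst him
      simp only [Cw, ← Nat.add_assoc]
      rw [show k + 1 + 1 = 2 + k by omega]
      rw [mul_assoc (Cw l 2 k), mul_assoc (Cw l 2 k), mul_assoc (x l (2 + k)),
        braid_s' (2 + k) (by omega) (by omega), ← mul_assoc,
        ← comm_big_Cw 2 k (2 + k + 1) (by omega) (by omega) (by omega)]
      simp only [mul_assoc]

lemma Dw_mul (i n : ℕ) (h2 : 2 ≤ i) (hin : i ≤ n) (hnl : n + 1 ≤ l) :
    Dw l 2 n * x l (i + 1) = x l i * Dw l 2 n := by
  induction n with
  | zero => omega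
  | succ m ih =>
    rcases Nat.lt_or_ge i (m + 1) with hlt | hge
    · have hcomm : x l (2 + m) * x l i = x l i * x l (2 + m) :=
        (comm_far i (2 + m) (by omega) (by omega) (by omega) (by omega)).symm
      rw [Dw, mul_assoc, ih (by omega) (by omega), ← mul_assoc, hcomm, mul_assoc]
    · have him : i = m + 1 := by omega
      obtain ⟨k, rfl⟩ : ∃ k, m = k + 1 := ⟨m - 1, by omega⟩
      subst him
      simp only [Dw, ← Nat.add_assoc]
      rw [show k + 1 + 1 = 2 + k by omega]
      rw [mul_assoc, mul_assoc, ← comm_big_Dw k (2 + k + 1) (by omega) (by omega),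
        ← braid_w (2 + k) (by omega) (by omega) (Dw l 2 k)]

lemma swap_w {G : Type*} [Group G] {a b c d : G} (h : a * b = c * d) (t : G) :
    a * (b * t) = c * (d * t) := by rw [← mul_assoc, h, mul_assoc]

lemma braid13_w (h : 3 ≤ l) (t : AD l) :
    x l 1 * (x l 3 * (x l 1 * t)) = x l 3 * (x l 1 * (x l 3 * t)) := by
  rw [← mul_assoc, ← mul_assoc, braid13 h]
  simp only [mul_assoc]

lemma Del_dw (n : ℕ) (h : n + 2 ≤ l) :
    Del l 2 (n + 1) = Del l 2 n * Dw l 2 (n + 1) := by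
  induction n with
  | zero => simp [Del, Cw, Dw]
  | succ m ih =>
    have hC : Cw l 2 (m + 1 + 1) = Cw l 2 (m + 1) * x l (m + 3) := by
      rw [Cw, x_congr (show 2 + (m + 1) = m + 3 by omega)]
    have hD : Dw l 2 (m + 1 + 1) = x l (m + 3) * Dw l 2 (m + 1) := by
      rw [Dw, x_congr (show 2 + (m + 1) = m + 3 by omega)]
    calc Del l 2 (m + 1 + 1)
        = Cw l 2 (m + 1) * (x l (m + 3) * (Del l 2 m * Dw l 2 (m + 1))) := by
          rw [Del, ih (by omega), hC]; simp only [mul_assoc]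
      _ = Cw l 2 (m + 1) * (Del l 2 m * (x l (m + 3) * Dw l 2 (m + 1))) := by
          rw [← mul_assoc (x l (m + 3)), comm_big_Del m (m + 3) (by omega) (by omega),
            mul_assoc]
      _ = Del l 2 (m + 1) * Dw l 2 (m + 1 + 1) := by
          rw [hD, Del]; simp only [mul_assoc]

lemma Del_last (n : ℕ) (h1 : 1 ≤ n) (h : n + 1 ≤ l) :
    Del l 2 n * x l (n + 1) = x l 2 * Del l 2 n := by
  induction n with
  | zero => omega
  | succ m ih =>
    rcases Nat.eq_zero_or_pos m with rfl | hm
    · simp [Del, Cw]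
    · obtain ⟨k, rfl⟩ : ∃ k, m = k + 1 := ⟨m - 1, by omega⟩
      calc Del l 2 (k + 1 + 1) * x l (k + 1 + 1 + 1)
          = Del l 2 (k + 1) * (Dw l 2 (k + 1 + 1) * x l (k + 1 + 1 + 1)) := by
            rw [Del_dw (k + 1) (by omega)]; simp only [mul_assoc]
        _ = Del l 2 (k + 1) * (x l (k + 1 + 1) * Dw l 2 (k + 1 + 1)) := by
            rw [Dw_mul (k + 1 + 1) (k + 1 + 1) (by omega) le_rfl (by omega)]
        _ = x l 2 * (Del l 2 (k + 1) * Dw l 2 (k + 1 + 1)) := by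
            rw [← mul_assoc, ih (by omega) (by omega), mul_assoc]
        _ = x l 2 * Del l 2 (k + 1 + 1) := by rw [← Del_dw (k + 1) (by omega)]


end ArtinTypeD

open ArtinTypeD in
/-- The second equality of **Lemma 3.5** of Labruère–Paris: in `A(D_l)` (`l ≥ 4`),
`Δ(x_2,…,x_l)⁻¹ x_2⁻¹ x_1 Δ(x_2,…,x_l) · Δ(x_2,…,x_{l−1})⁻¹ x_2⁻¹ x_1 Δ(x_2,…,x_{l−1})
  = x_{l−1} · Δ(x_2,…,x_l)⁻¹ x_2⁻¹ x_1 Δ(x_2,…,x_l) · x_{l−1}⁻¹`. -/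
theorem lemma_3_5_second (l : ℕ) (hl : 4 ≤ l) :
    (delta l 2 l)⁻¹ * (x l 2)⁻¹ * x l 1 * delta l 2 l *
      ((delta l 2 (l - 1))⁻¹ * (x l 2)⁻¹ * x l 1 * delta l 2 (l - 1)) =
    x l (l - 1) * ((delta l 2 l)⁻¹ * (x l 2)⁻¹ * x l 1 * delta l 2 l) * (x l (l - 1))⁻¹ := by
  obtain ⟨m, rfl⟩ : ∃ m, l = m + 4 := ⟨l - 4, by omega⟩
  set l := m + 4 with hldef
  rw [show m + 4 - 1 = m + 3 by omega, delta_eq_s3, delta_eq_s3,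
    show m + 4 + 1 - 2 = m + 3 by omega, show m + 3 + 1 - 2 = m + 2 by omega]
  -- abbreviations
  have hCD : Del l 2 (m + 3) = Cw l 2 (m + 3) * Del l 2 (m + 2) := by
    rw [show m + 3 = m + 2 + 1 from rfl, Del]
  have hCc : Cw l 2 (m + 3) = x l 2 * Cw l 3 (m + 2) := Cw_cons 2 (m + 2)
  have hCc3 : Cw l 3 (m + 2) = x l 3 * Cw l 4 (m + 1) := Cw_cons 3 (m + 1)
  have hlast : Del l 2 (m + 2) * x l (m + 3) = x l 2 * Del l 2 (m + 2) :=
    Del_last (m + 2) (by omega) (by omega)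
  have h2b : Del l 2 (m + 2) * (x l (m + 3))⁻¹ = (x l 2)⁻¹ * Del l 2 (m + 2) := by
    rw [mul_inv_eq_iff_eq_mul, mul_assoc, hlast, inv_mul_cancel_left]
  have h2a0 : x l (m + 3) * (Del l 2 (m + 2))⁻¹ = (Del l 2 (m + 2))⁻¹ * x l 2 := by
    have := congrArg (·⁻¹) h2b
    simpa [mul_inv_rev, mul_assoc] using this
  have h2a := swap_w h2a0
  have hc12 : Commute (x l 1) (x l 2) := comm12 (by omega)
  have h6w := swap_w hc12.inv_right.eq.symm
  have h3w : ∀ t : AD l, (x l 2)⁻¹ * (x l 1 * (Cw l 2 (m + 3) * t)) =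
      x l 1 * (Cw l 3 (m + 2) * t) := by
    intro t
    rw [hCc, mul_assoc, swap_w hc12 (Cw l 3 (m + 2) * t), inv_mul_cancel_left]
  have hs1 := swap_w (comm_small_Cw (l := l) 1 (m + 1) (by omega) (by omega) (by omega)).symm
  have hs2 := swap_w (comm_small_Cw (l := l) 2 (m + 1) (by omega) (by omega) (by omega)).symm
  have h4w : ∀ t : AD l, x l 1 * (Cw l 3 (m + 2) * (x l 1 * t)) =
      x l 3 * (x l 1 * (Cw l 3 (m + 2) * t)) := by
    intro t
    rw [hCc3]
    simp only [mul_assoc]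
    rw [hs1 t, braid13_w (by omega) (Cw l 4 (m + 1) * t)]
  have hA2 : Cw l 2 (m + 3) * x l 2 = x l 3 * Cw l 2 (m + 3) := by
    calc Cw l 2 (m + 3) * x l 2
        = x l 2 * (x l 3 * (Cw l 4 (m + 1) * x l 2)) := by
          rw [hCc, hCc3]; simp only [mul_assoc]
      _ = x l 2 * (x l 3 * (x l 2 * Cw l 4 (m + 1))) := by
          rw [← comm_small_Cw 2 (m + 1) (by omega) (by omega) (by omega)]
      _ = x l 3 * (x l 2 * (x l 3 * Cw l 4 (m + 1))) :=
          braid_w 2 le_rfl (by omega) _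
      _ = x l 3 * Cw l 2 (m + 3) := by simp only [hCc, hCc3, mul_assoc]
  have h5w0 : x l 2 * (Cw l 2 (m + 3))⁻¹ = (Cw l 2 (m + 3))⁻¹ * x l 3 := by
    rw [mul_inv_eq_iff_eq_mul, mul_assoc, ← hA2, inv_mul_cancel_left]
  have h5w := swap_w h5w0
  rw [hCD]
  simp only [mul_inv_rev, mul_assoc, mul_inv_cancel_left, inv_mul_cancel_left]
  rw [h2b, h2a, h3w, h3w, h6w, h4w, h5w]
end

section
/- In the Artin group A(D_6), set w_1 = Δ(x_1,x_3)⁻¹ x_1⁻¹ x_2 Δ(x_1,x_3), w_2 = Δ(x_1,x_3,x_4)⁻¹ x_1⁻¹ x_2 Δ(x_1,x_3,x_4), and w_3 = Δ(x_1,x_3,x_4,x_5)⁻¹ x_1⁻¹ x_2 Δ(x_1,x_3,x_4,x_5). Then x_2⁻¹ x_1 w_1⁻¹ w_2⁻¹ w_3⁻¹ x_6 w_3 x_6⁻¹ w_1 = (x_2x_3x_4x_5x_6)⁻⁶ (x_1x_2x_3x_4x_5x_6)⁵. -/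
namespace ArtinTypeD

/-- `w_1 = Δ(x_1,x_3)⁻¹ x_1⁻¹ x_2 Δ(x_1,x_3)` in `A(D_6)`. -/
def w1 : AD 6 :=
  (deltaList [x 6 1, x 6 3])⁻¹ * (x 6 1)⁻¹ * x 6 2 * deltaList [x 6 1, x 6 3]

/-- `w_2 = Δ(x_1,x_3,x_4)⁻¹ x_1⁻¹ x_2 Δ(x_1,x_3,x_4)` in `A(D_6)`. -/
def w2 : AD 6 :=
  (deltaList [x 6 1, x 6 3, x 6 4])⁻¹ * (x 6 1)⁻¹ * x 6 2 * deltaList [x 6 1, x 6 3, x 6 4]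

/-- `w_3 = Δ(x_1,x_3,x_4,x_5)⁻¹ x_1⁻¹ x_2 Δ(x_1,x_3,x_4,x_5)` in `A(D_6)`. -/
def w3 : AD 6 :=
  (deltaList [x 6 1, x 6 3, x 6 4, x 6 5])⁻¹ * (x 6 1)⁻¹ * x 6 2 *
    deltaList [x 6 1, x 6 3, x 6 4, x 6 5]

end ArtinTypeD

namespace ArtinCert

open ArtinTypeD

/-- The generator `x_{i+1}`. -/
def gen (i : Fin 6) : AD 6 := PresentedGroup.of i

@[simp] lemma mk_of (i : Fin 6) :
    PresentedGroup.mk (relsD 6) (FreeGroup.of i) = gen i := rfl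

lemma rel_mk {i j : Fin 6} (h : i ≠ j) :
    PresentedGroup.mk (relsD 6) (altWord i j (coxD 6 i j)) =
      PresentedGroup.mk (relsD 6) (altWord j i (coxD 6 i j)) := by
  have hmem : altWord i j (coxD 6 i j) * (altWord j i (coxD 6 i j))⁻¹ ∈ relsD 6 :=
    ⟨i, j, h, rfl⟩
  have h1 : PresentedGroup.mk (relsD 6)
      (altWord i j (coxD 6 i j) * (altWord j i (coxD 6 i j))⁻¹) = 1 := by
    exact (QuotientGroup.eq_one_iff _).2 (Subgroup.subset_normalClosure hmem)
  rw [map_mul, map_inv] at h1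
  exact mul_inv_eq_one.mp h1

lemma braid_rel {i j : Fin 6} (h : i ≠ j) (h3 : coxD 6 i j = 3) :
    gen i * gen j * gen i = gen j * gen i * gen j := by
  have h1 := rel_mk h
  rw [h3] at h1
  simpa [altWord, map_mul, map_one, mul_assoc] using h1

lemma comm_rel {i j : Fin 6} (h : i ≠ j) (h2 : coxD 6 i j = 2) :
    gen i * gen j = gen j * gen i := by
  have h1 := rel_mk h
  rw [h2] at h1
  simpa [altWord, map_mul, map_one, mul_assoc] using h1

/-- Adjacency (label `3`) on `0`-based vertex indices. -/
def adjB (p q : ℕ) : Bool :=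
  (p == 0 && q == 2) || (q == 0 && p == 2) || (p != 0 && p + 1 == q) || (q != 0 && q + 1 == p)

lemma adj_cox : ∀ i j : Fin 6, adjB i.1 j.1 = true → i ≠ j ∧ coxD 6 i j = 3 := by decide

lemma nadj_cox : ∀ i j : Fin 6, i ≠ j → adjB i.1 j.1 = false → coxD 6 i j = 2 := by decide

/-- `0`-based generator with junk value `1`. -/
def g' (p : ℕ) : AD 6 := if h : p < 6 then gen ⟨p, h⟩ else 1

lemma g'_comm {p q : ℕ} (h : (p == q || !adjB p q) = true) : Commute (g' p) (g' q) := by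
  rcases Bool.or_eq_true_iff.mp h with h1 | h1
  · rw [Nat.beq_eq_true_eq] at h1
    subst h1; exact Commute.refl _
  · by_cases hp : p < 6
    · by_cases hq : q < 6
      · by_cases hpq : p = q
        · subst hpq; exact Commute.refl _
        · have hne : (⟨p, hp⟩ : Fin 6) ≠ ⟨q, hq⟩ := by
            simp [Fin.ext_iff]; omega
          have h2 := nadj_cox ⟨p, hp⟩ ⟨q, hq⟩ hne (by simpa using h1)
          have := comm_rel hne h2
          simpa [g', hp, hq, Commute, SemiconjBy] using this
      · simp [g', hq]
    · simp [g', hp]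

lemma g'_braid {p q : ℕ} (hp : p < 6) (hq : q < 6) (h : adjB p q = true) :
    g' p * g' q * g' p = g' q * g' p * g' q := by
  obtain ⟨hne, h3⟩ := adj_cox ⟨p, hp⟩ ⟨q, hq⟩ h
  have := braid_rel hne h3
  simpa [g', hp, hq] using this

section BraidVariants

variable {G : Type*} [Group G] {a b : G}

lemma br2 (h : a * b * a = b * a * b) : a⁻¹ * b⁻¹ * a⁻¹ = b⁻¹ * a⁻¹ * b⁻¹ := by
  have : (a * b * a)⁻¹ = (b * a * b)⁻¹ := by rw [h]
  calc a⁻¹ * b⁻¹ * a⁻¹ = (a * b * a)⁻¹ := by group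
    _ = (b * a * b)⁻¹ := this
    _ = b⁻¹ * a⁻¹ * b⁻¹ := by group

lemma br3 (h : a * b * a = b * a * b) : a * b * a⁻¹ = b⁻¹ * a * b := by
  calc a * b * a⁻¹ = b⁻¹ * (b * a * b) * a⁻¹ := by group
    _ = b⁻¹ * (a * b * a) * a⁻¹ := by rw [h]
    _ = b⁻¹ * a * b := by group

lemma br4 (h : a * b * a = b * a * b) : a⁻¹ * b * a = b * a * b⁻¹ := by
  calc a⁻¹ * b * a = a⁻¹ * (b * a * b) * b⁻¹ := by group
    _ = a⁻¹ * (a * b * a) * b⁻¹ := by rw [h]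
    _ = b * a * b⁻¹ := by group

lemma br5 (h : a * b * a = b * a * b) : a * b⁻¹ * a⁻¹ = b⁻¹ * a⁻¹ * b := by
  have h3 := br3 h
  calc a * b⁻¹ * a⁻¹ = (a * b * a⁻¹)⁻¹ := by group
    _ = (b⁻¹ * a * b)⁻¹ := by rw [h3]
    _ = b⁻¹ * a⁻¹ * b := by group

lemma br6 (h : a * b * a = b * a * b) : a⁻¹ * b⁻¹ * a = b * a⁻¹ * b⁻¹ := by
  have h4 := br4 h
  calc a⁻¹ * b⁻¹ * a = (a⁻¹ * b * a)⁻¹ := by group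
    _ = (b * a * b⁻¹)⁻¹ := by rw [h4]
    _ = b * a⁻¹ * b⁻¹ := by group

end BraidVariants

/-- Decoding of a signed letter: `2*p` is `x_{p+1}`, `2*p+1` is its inverse. -/
def d (v : ℕ) : AD 6 := if v % 2 = 0 then g' (v / 2) else (g' (v / 2))⁻¹

/-- Evaluation of a signed word. -/
def ev (w : List ℕ) : AD 6 := (w.map d).prod

@[simp] lemma ev_nil : ev [] = 1 := rfl

@[simp] lemma ev_cons (u : ℕ) (w : List ℕ) : ev (u :: w) = d u * ev w := by
  simp [ev]

/-- The partner (formal inverse) of a signed letter. -/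
def partner (u : ℕ) : ℕ := if u % 2 = 0 then u + 1 else u - 1

lemma d_partner (u : ℕ) : d u * d (partner u) = 1 := by
  rcases Nat.even_or_odd u with he | ho
  · have h0 : u % 2 = 0 := Nat.even_iff.mp he
    have h1 : (u + 1) % 2 = 1 := by omega
    have h2 : (u + 1) / 2 = u / 2 := by omega
    simp [partner, d, h0, h1, h2]
  · have h0 : u % 2 = 1 := Nat.odd_iff.mp ho
    have h1 : (u - 1) % 2 = 0 := by omega
    have h2 : (u - 1) / 2 = u / 2 := by omega
    simp [partner, d, h0, h1, h2]

lemma d_comm {u v : ℕ} (h : (u / 2 == v / 2 || !adjB (u / 2) (v / 2)) = true) :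
    Commute (d u) (d v) := by
  have hc : Commute (g' (u / 2)) (g' (v / 2)) := g'_comm h
  unfold d
  split <;> split
  · exact hc
  · exact hc.inv_right
  · exact hc.inv_left
  · exact hc.inv_left.inv_right

/-- Result of a braid rewrite on the three signed letters `u v w`, if applicable. -/
def braidOut (u v w : ℕ) : Option (List ℕ) :=
  if u < 12 && v < 12 && (u / 2 == w / 2) && adjB (u / 2) (v / 2) then
    let p := u / 2
    let q := v / 2
    if u % 2 = 0 then
      if v % 2 = 0 then
        if w % 2 = 0 then some [2 * q, 2 * p, 2 * q] else some [2 * q + 1, 2 * p, 2 * q]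
      else
        if w % 2 = 0 then none else some [2 * q + 1, 2 * p + 1, 2 * q]
    else
      if v % 2 = 0 then
        if w % 2 = 0 then some [2 * q, 2 * p, 2 * q + 1] else none
      else
        if w % 2 = 0 then some [2 * q, 2 * p + 1, 2 * q + 1]
        else some [2 * q + 1, 2 * p + 1, 2 * q + 1]
  else none

@[simp] lemma d_two_mul (p : ℕ) : d (2 * p) = g' p := by
  have h0 : (2 * p) % 2 = 0 := by omega
  have h1 : (2 * p) / 2 = p := by omega
  simp [d, h0, h1]

@[simp] lemma d_two_mul_add_one (p : ℕ) : d (2 * p + 1) = (g' p)⁻¹ := by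
  have h0 : (2 * p + 1) % 2 = 1 := by omega
  have h1 : (2 * p + 1) / 2 = p := by omega
  simp [d, h0, h1]

lemma d_eval_pos {u : ℕ} (h : u % 2 = 0) : d u = g' (u / 2) := by simp [d, h]

lemma d_eval_neg {u : ℕ} (h : u % 2 = 1) : d u = (g' (u / 2))⁻¹ := by simp [d, h]

lemma braidOut_sound {u v w : ℕ} {out : List ℕ} (h : braidOut u v w = some out) :
    d u * (d v * d w) = ev out := by
  unfold braidOut at h
  split_ifs at h with hcond <;>
    first
      | (injection h with h
         subst h
         simp only [Bool.and_eq_true, decide_eq_true_eq, beq_iff_eq] at hcond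
         obtain ⟨⟨⟨hub, hvb⟩, huw⟩, hadj⟩ := hcond
         have hp : u / 2 < 6 := by omega
         have hq : v / 2 < 6 := by omega
         have hbr := g'_braid hp hq hadj
         have hdw0 : w % 2 = 0 → d w = g' (u / 2) := fun hh => by
           rw [d_eval_pos hh, huw]
         have hdw1 : w % 2 = 1 → d w = (g' (u / 2))⁻¹ := fun hh => by
           rw [d_eval_neg hh, huw]
         first
           | (rw [d_eval_pos (by omega : u % 2 = 0), d_eval_pos (by omega : v % 2 = 0),
               hdw0 (by omega)]
              simp only [ev_cons, ev_nil, d_two_mul, d_two_mul_add_one, mul_one, ← mul_assoc]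
              exact hbr)
           | (rw [d_eval_pos (by omega : u % 2 = 0), d_eval_pos (by omega : v % 2 = 0),
               hdw1 (by omega)]
              simp only [ev_cons, ev_nil, d_two_mul, d_two_mul_add_one, mul_one, ← mul_assoc]
              exact br3 hbr)
           | (rw [d_eval_pos (by omega : u % 2 = 0), d_eval_neg (by omega : v % 2 = 1),
               hdw1 (by omega)]
              simp only [ev_cons, ev_nil, d_two_mul, d_two_mul_add_one, mul_one, ← mul_assoc]
              exact br5 hbr)
           | (rw [d_eval_neg (by omega : u % 2 = 1), d_eval_pos (by omega : v % 2 = 0),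
               hdw0 (by omega)]
              simp only [ev_cons, ev_nil, d_two_mul, d_two_mul_add_one, mul_one, ← mul_assoc]
              exact br4 hbr)
           | (rw [d_eval_neg (by omega : u % 2 = 1), d_eval_neg (by omega : v % 2 = 1),
               hdw0 (by omega)]
              simp only [ev_cons, ev_nil, d_two_mul, d_two_mul_add_one, mul_one, ← mul_assoc]
              exact br6 hbr)
           | (rw [d_eval_neg (by omega : u % 2 = 1), d_eval_neg (by omega : v % 2 = 1),
               hdw1 (by omega)]
              simp only [ev_cons, ev_nil, d_two_mul, d_two_mul_add_one, mul_one, ← mul_assoc]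
              exact br2 hbr))
      | exact Option.noConfusion h

/-- One rewriting rule applied at the head of the word:
`0` = swap, `1` = cancel, `2` = braid, `100 + v` = insert the pair `v v⁻¹`. -/
def app : ℕ → List ℕ → Option (List ℕ)
  | 0, u :: v :: rest =>
    if (u / 2 == v / 2 || !adjB (u / 2) (v / 2)) then some (v :: u :: rest) else none
  | 1, u :: v :: rest => if v == partner u then some rest else none
  | 2, u :: v :: x :: rest => (braidOut u v x).map (· ++ rest)
  | r, w => if 100 ≤ r then some ((r - 100) :: partner (r - 100) :: w) else none

/-- A rule applied at position `p`. -/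
def apMove : ℕ × ℕ → List ℕ → Option (List ℕ)
  | (r, 0), w => app r w
  | (r, p + 1), u :: rest => (apMove (r, p) rest).map (u :: ·)
  | _, [] => none

/-- Run a list of moves. -/
def run : List (ℕ × ℕ) → List ℕ → Option (List ℕ)
  | [], w => some w
  | mv :: ms, w =>
    match apMove mv w with
    | some w2 => run ms w2
    | none => none

lemma ins_sound {r : ℕ} {w w2 : List ℕ}
    (h : (if 100 ≤ r then some ((r - 100) :: partner (r - 100) :: w) else none) = some w2) :
    ev w = ev w2 := by
  split_ifs at h
  cases h
  simp only [ev_cons, ← mul_assoc, d_partner, one_mul]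

lemma app_sound : ∀ (r : ℕ) (w w2 : List ℕ), app r w = some w2 → ev w = ev w2
  | 0, u :: v :: rest, w2, h => by
    simp only [app] at h
    split_ifs at h with hc
    cases h
    simp only [ev_cons, ← mul_assoc]
    rw [(d_comm hc).eq]
  | 1, u :: v :: rest, w2, h => by
    simp only [app] at h
    split_ifs at h with hc
    cases h
    have hv : v = partner u := eq_of_beq hc
    subst hv
    simp only [ev_cons, ← mul_assoc, d_partner, one_mul]
  | 2, u :: v :: x :: rest, w2, h => by
    simp only [app] at h
    cases hb : braidOut u v x with
    | none => rw [hb] at h; exact absurd h (by simp)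
    | some out =>
      rw [hb] at h
      simp only [Option.map_some, Option.some.injEq] at h
      subst h
      have hs := braidOut_sound hb
      calc ev (u :: v :: x :: rest) = (d u * (d v * d x)) * ev rest := by
            simp only [ev_cons, mul_assoc]
        _ = ev out * ev rest := by rw [hs]
        _ = ev (out ++ rest) := by simp [ev, List.map_append, List.prod_append]
  | 0, [], w2, h => by simp only [app] at h; exact ins_sound h
  | 0, [u], w2, h => by simp only [app] at h; exact ins_sound h
  | 1, [], w2, h => by simp only [app] at h; exact ins_sound h
  | 1, [u], w2, h => by simp only [app] at h; exact ins_sound h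
  | 2, [], w2, h => by simp only [app] at h; exact ins_sound h
  | 2, [u], w2, h => by simp only [app] at h; exact ins_sound h
  | 2, [u, v], w2, h => by simp only [app] at h; exact ins_sound h
  | (r + 3), w, w2, h => by simp only [app] at h; exact ins_sound h
def lhsW : List Nat := [3, 0, 1, 5, 1, 3, 0, 0, 4, 0, 1, 5, 1, 7, 5, 1, 3, 0, 0, 4, 6, 0, 4, 0, 1, 5, 1, 7, 5, 1, 9, 7, 5, 1, 3, 0, 0, 4, 6, 8, 0, 4, 6, 0, 4, 0, 10, 1, 5, 1, 7, 5, 1, 9, 7, 5, 1, 1, 2, 0, 4, 6, 8, 0, 4, 6, 0, 4, 0, 11, 1, 5, 1, 1, 2, 0, 4, 0]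

def rhsW : List Nat := [11, 9, 7, 5, 3, 11, 9, 7, 5, 3, 11, 9, 7, 5, 3, 11, 9, 7, 5, 3, 11, 9, 7, 5, 3, 11, 9, 7, 5, 3, 0, 2, 4, 6, 8, 10, 0, 2, 4, 6, 8, 10, 0, 2, 4, 6, 8, 10, 0, 2, 4, 6, 8, 10, 0, 2, 4, 6, 8, 10]

def cert : List (Nat × Nat) := [(1, 23), (1, 22), (1, 21), (1, 20), (1, 19), (1, 18), (1, 9), (1, 8), (1, 7), (1, 1), (0, 2), (1, 3), (0, 5), (1, 6), (0, 9), (1, 10), (0, 20), (0, 21), (0, 22), (0, 23), (0, 24), (0, 25), (1, 19), (1, 18), (1, 17), (1, 16), (1, 15), (1, 14), (2, 13), (0, 15), (0, 16), (0, 17), (0, 12), (0, 11), (0, 10), (2, 13), (0, 12), (0, 11), (0, 15), (2, 13), (0, 12), (0, 16), (0, 15), (2, 13), (101, 32), (105, 33), (101, 34), (107, 35), (105, 36), (101, 37), (109, 38), (107, 39), (105, 40), (101, 41), (0, 30), (0, 29), (0, 28), (0, 27), (0, 26), (0, 25), (1, 31), (1, 30), (1, 29), (1, 28), (1, 27), (1,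 26), (2, 24), (0, 23), (0, 22), (0, 21), (0, 26), (0, 27), (0, 28), (2, 24), (0, 26), (0, 27), (0, 23), (2, 24), (0, 26), (0, 22), (0, 23), (2, 24), (1, 39), (1, 38), (1, 37), (0, 38), (1, 37), (0, 18), (0, 17), (0, 16), (2, 14), (0, 19), (0, 18), (0, 17), (1, 20), (1, 19), (1, 18), (2, 16), (0, 15), (0, 18), (2, 16), (2, 14), (2, 18), (0, 17), (0, 23), (0, 22), (0, 21), (0, 20), (2, 18), (0, 24), (0, 23), (0, 27), (0, 26), (0, 25), (0, 24), (0, 26), (0, 28), (0, 27), (0, 30), (0, 29), (0, 28), (1, 16), (1, 15), (103, 15), (105, 16), (103, 17), (107, 18), (105, 19), (103, 20), (109, 21), (107, 22), (105, 23), (103, 24), (111, 25), (109, 26), (107, 27), (105, 28), (103, 29), (0, 44), (2, 45), (2, 43), (0, 42), (0, 41), (0, 45), (2, 43), (2, 47), (0, 46), (0, 49), (2, 47), (2, 45), (0, 44), (2, 42), (2, 40), (0, 39), (0, 38), (0, 37), (2, 44), (0, 43), (0, 42), (2, 40), (0, 39), (0, 43), (0, 47), (0, 46), (2, 44), (2,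 42), (0, 41), (2, 50), (0, 49), (0, 52), (2, 50), (2, 48), (0, 47), (0, 46), (0, 45), (0, 48), (0, 50), (0, 53), (0, 52), (0, 51), (2, 49), (2, 47), (0, 46), (2, 44), (0, 43), (0, 42), (2, 40), (2, 38), (2, 36), (0, 35), (0, 34), (0, 33), (0, 32), (0, 42), (0, 41), (2, 43), (0, 42), (2, 40), (0, 39), (0, 38), (2, 36), (0, 35), (0, 34), (0, 39), (0, 46), (0, 47), (2, 45), (0, 44), (0, 43), (0, 42), (2, 40), (2, 38), (0, 37), (0, 36), (0, 43), (0, 42), (0, 41), (0, 44), (0, 49), (0, 48), (0, 47), (2, 45), (2, 43), (0, 42), (2, 40), (0, 39), (0, 38), (2, 54), (0, 53), (0, 56), (2, 54), (2, 52), (0, 51), (0, 50), (0, 52), (0, 54), (0, 57), (0, 56), (0, 55), (2, 53), (2, 51), (2, 49), (0, 48), (0, 47), (0, 46), (0, 45), (0, 44), (0, 43), (0, 49), (0, 48), (0, 47), (0, 51), (0, 50), (0, 53), (0, 52), (0, 58), (0, 57), (0, 56), (0, 55), (0, 54), (0, 53), (2, 51), (2, 49), (0, 48), (2, 46), (0,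 45), (0, 44), (2, 42), (0, 41), (0, 40), (0, 39), (2, 37), (2, 35), (2, 33), (2, 31), (0, 30), (0, 33), (0, 35), (0, 34), (0, 37), (0, 36), (0, 35), (0, 39), (0, 38), (0, 40), (2, 41), (2, 39), (2, 37), (0, 39), (0, 41), (0, 40), (0, 43), (0, 42), (0, 41), (0, 44), (2, 45), (2, 43), (0, 42), (0, 45), (0, 47), (0, 46), (0, 53), (0, 52), (0, 51), (0, 50), (0, 49), (0, 48), (0, 47), (2, 49), (0, 51), (0, 54), (0, 53), (0, 52), (0, 56), (0, 55), (0, 54), (0, 53), (0, 54), (2, 0), (2, 2), (0, 1), (0, 4), (2, 2), (2, 0), (0, 2), (2, 5), (0, 4), (0, 7), (2, 5), (2, 3), (0, 2), (0, 1), (0, 3), (0, 5), (0, 8), (0, 7), (0, 6), (2, 4), (2, 2), (2, 0), (0, 2), (0, 4), (0, 3), (2, 9), (0, 8), (0, 11), (2, 9), (2, 7), (0, 6), (0, 5), (0, 7), (0, 9), (0, 12), (0, 11), (0, 10), (2, 8), (2, 6), (2, 4), (0, 3), (0, 2), (0, 1), (0, 4), (0, 3), (0, 6), (0, 5), (0,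 8), (0, 7), (0, 13), (0, 12), (0, 11), (0, 10), (0, 9), (0, 8), (2, 6), (2, 4), (2, 2), (2, 0), (0, 2), (0, 4), (0, 3), (0, 6), (0, 5), (0, 4), (0, 14), (0, 13), (0, 12), (0, 11), (0, 10), (0, 9), (0, 15), (0, 14), (0, 13), (0, 16), (0, 15), (0, 14), (0, 17), (0, 18), (0, 19)]

lemma apMove_sound : ∀ (mv : ℕ × ℕ) (w w2 : List ℕ), apMove mv w = some w2 → ev w = ev w2
  | (r, 0), w, w2, h => by
    simp only [apMove] at h
    exact app_sound r w w2 h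
  | (r, p + 1), u :: rest, w2, h => by
    unfold apMove at h
    cases ha : apMove (r, p) rest with
    | none => rw [ha] at h; exact absurd h (by simp)
    | some w' =>
      rw [ha] at h
      simp only [Option.map_some, Option.some.injEq] at h
      subst h
      rw [ev_cons, ev_cons, apMove_sound (r, p) rest w' ha]
  | (_, _ + 1), [], w2, h => by exact absurd h (by simp [apMove])

lemma run_sound : ∀ (ms : List (ℕ × ℕ)) (w w2 : List ℕ), run ms w = some w2 → ev w = ev w2
  | [], w, w2, h => by
    simp only [run, Option.some.injEq] at h
    rw [h]
  | mv :: ms, w, w2, h => by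
    unfold run at h
    cases ha : apMove mv w with
    | none => rw [ha] at h; exact absurd h (by simp)
    | some wmid =>
      rw [ha] at h
      exact (apMove_sound mv w wmid ha).trans (run_sound ms wmid w2 h)

set_option maxRecDepth 100000 in
lemma run_cert : run cert lhsW = some rhsW := by decide

lemma d0 : d 0 = g' 0 := rfl
lemma d1 : d 1 = (g' 0)⁻¹ := rfl
lemma d2 : d 2 = g' 1 := rfl
lemma d3 : d 3 = (g' 1)⁻¹ := rfl
lemma d4 : d 4 = g' 2 := rfl
lemma d5 : d 5 = (g' 2)⁻¹ := rfl
lemma d6 : d 6 = g' 3 := rfl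
lemma d7 : d 7 = (g' 3)⁻¹ := rfl
lemma d8 : d 8 = g' 4 := rfl
lemma d9 : d 9 = (g' 4)⁻¹ := rfl
lemma d10 : d 10 = g' 5 := rfl
lemma d11 : d 11 = (g' 5)⁻¹ := rfl

lemma x1 : x 6 1 = g' 0 := rfl
lemma x2 : x 6 2 = g' 1 := rfl
lemma x3 : x 6 3 = g' 2 := rfl
lemma x4 : x 6 4 = g' 3 := rfl
lemma x5 : x 6 5 = g' 4 := rfl
lemma x6 : x 6 6 = g' 5 := rfl

lemma ev_lhsW :
    ev lhsW = (x 6 2)⁻¹ * x 6 1 * w1⁻¹ * w2⁻¹ * w3⁻¹ * x 6 6 * w3 * (x 6 6)⁻¹ * w1 := by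
  simp only [lhsW, ev_cons, ev_nil, d0, d1, d2, d3, d4, d5, d6, d7, d8, d9, d10, d11,
    w1, w2, w3, deltaList, x1, x2, x3, x4, x5, x6, List.length_cons, List.length_nil,
    List.range_succ, List.range_zero, List.reverse_nil, List.reverse_cons, List.nil_append,
    List.cons_append, List.map_cons, List.map_nil, List.take_succ_cons, List.take_zero,
    List.prod_cons, List.prod_nil]
  simp only [mul_inv_rev, inv_inv, mul_one, one_mul, mul_assoc]

lemma ev_rhsW :
    ev rhsW = ((x 6 2 * x 6 3 * x 6 4 * x 6 5 * x 6 6) ^ 6)⁻¹ *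
      (x 6 1 * x 6 2 * x 6 3 * x 6 4 * x 6 5 * x 6 6) ^ 5 := by
  simp only [rhsW, ev_cons, ev_nil, d0, d1, d2, d3, d4, d5, d6, d7, d8, d9, d10, d11,
    x1, x2, x3, x4, x5, x6, pow_succ, pow_zero, mul_inv_rev, inv_inv, mul_one, one_mul,
    mul_assoc]

end ArtinCert

open ArtinTypeD in
/-- **Lemma 3.6 (i)** of Labruère–Paris: in `A(D_6)`,
`x_2⁻¹ x_1 w_1⁻¹ w_2⁻¹ w_3⁻¹ x_6 w_3 x_6⁻¹ w_1 = Δ⁻²(x_2,…,x_6) Δ(x_1,…,x_6)`,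
where `Δ²(x_2,…,x_6) = (x_2x_3x_4x_5x_6)⁶` and `Δ(x_1,…,x_6) = (x_1x_2x_3x_4x_5x_6)⁵`. -/
theorem lemma_3_6_i :
    (x 6 2)⁻¹ * x 6 1 * w1⁻¹ * w2⁻¹ * w3⁻¹ * x 6 6 * w3 * (x 6 6)⁻¹ * w1 =
      ((x 6 2 * x 6 3 * x 6 4 * x 6 5 * x 6 6) ^ 6)⁻¹ *
        (x 6 1 * x 6 2 * x 6 3 * x 6 4 * x 6 5 * x 6 6) ^ 5 := by
  rw [← ArtinCert.ev_lhsW, ← ArtinCert.ev_rhsW]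
  exact ArtinCert.run_sound ArtinCert.cert ArtinCert.lhsW ArtinCert.rhsW ArtinCert.run_cert
end

section
/- In the Artin group A(D_4) the following equality holds: (x_1x_2x_3x_4)³ (x_1x_3x_4)⁻⁴ = x_2x_3x_2⁻¹ x_1 x_3⁻¹x_2⁻¹ x_4x_3x_2 x_1⁻¹ x_3⁻¹x_4⁻¹. -/
namespace ArtinTypeD

lemma mk_rel_eq {i j : Fin 4} (hij : i ≠ j) :
    PresentedGroup.mk (relsD 4) (altWord i j (coxD 4 i j)) =
      PresentedGroup.mk (relsD 4) (altWord j i (coxD 4 i j)) := by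
  rw [← mul_inv_eq_one, ← map_inv, ← map_mul]
  apply (QuotientGroup.eq_one_iff _).mpr
  exact Subgroup.subset_normalClosure ⟨i, j, hij, rfl⟩

lemma braidD4 {i j : Fin 4} (hij : i ≠ j) (h3 : coxD 4 i j = 3) :
    (PresentedGroup.of i : AD 4) * PresentedGroup.of j * PresentedGroup.of i =
      PresentedGroup.of j * PresentedGroup.of i * PresentedGroup.of j := by
  have h := mk_rel_eq hij
  rw [h3] at h
  simpa [altWord, map_mul, mul_assoc, PresentedGroup.of] using h

lemma commD4 {i j : Fin 4} (hij : i ≠ j) (h2 : coxD 4 i j = 2) :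
    (PresentedGroup.of i : AD 4) * PresentedGroup.of j =
      PresentedGroup.of j * PresentedGroup.of i := by
  have h := mk_rel_eq hij
  rw [h2] at h
  simpa [altWord, map_mul, mul_assoc, PresentedGroup.of] using h

set_option maxHeartbeats 2000000 in
/-- The key group-theoretic computation, carried out abstractly from the six
Artin relations of `D_4`. -/
lemma aux {G : Type*} [Group G] (a b c d : G)
    (h1 : a * c * a = c * a * c) (h2 : b * c * b = c * b * c)
    (h3 : c * d * c = d * c * d) (h4 : a * b = b * a)
    (h5 : a * d = d * a) (h6 : b * d = d * b) :
    (a * b * c * d) ^ 3 * ((a * c * d) ^ 4)⁻¹ =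
      b * c * b⁻¹ * a * c⁻¹ * b⁻¹ * d * c * b * a⁻¹ * c⁻¹ * d⁻¹ := by
  have key : b * c * b⁻¹ * a * c⁻¹ * b⁻¹ * d * c * b * a⁻¹ * c⁻¹ * d⁻¹ * (a * c * d * (a * c * d) * (a * c * d)) =
      b * a * c * d * (b * a * c * d) * b := by
    calc b * c * b⁻¹ * a * c⁻¹ * b⁻¹ * d * c * b * a⁻¹ * c⁻¹ * d⁻¹ * (a * c * d * (a * c * d) * (a * c * d))
      _ = b * c * b⁻¹ * a * c⁻¹ * b⁻¹ * d * c * b * a⁻¹ * c⁻¹ * d⁻¹ * a * c * d * a * c * d * a * c * d := by group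
      _ = (b * c * b⁻¹ * a * c⁻¹ * b⁻¹ * d * c * b * a⁻¹ * c⁻¹ * d⁻¹) * (a * d) * (d⁻¹ * c * d * a * c * d * a * c * d) := by group
      _ = (b * c * b⁻¹ * a * c⁻¹ * b⁻¹ * d * c * b * a⁻¹ * c⁻¹ * d⁻¹) * (d * a) * (d⁻¹ * c * d * a * c * d * a * c * d) := by rw [mul_right_cancel_iff, mul_left_cancel_iff]; exact h5
      _ = (b * c * b⁻¹ * a * c⁻¹ * b⁻¹ * d * c * b * a⁻¹ * c⁻¹ * a * d⁻¹) * (c * d * c) * (c⁻¹ * a * c * d * a * c * d) := by group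
      _ = (b * c * b⁻¹ * a * c⁻¹ * b⁻¹ * d * c * b * a⁻¹ * c⁻¹ * a * d⁻¹) * (d * c * d) * (c⁻¹ * a * c * d * a * c * d) := by rw [mul_right_cancel_iff, mul_left_cancel_iff]; exact h3
      _ = (b * c * b⁻¹ * a * c⁻¹ * b⁻¹ * d * c * b * a⁻¹ * c⁻¹ * a * c * d * c⁻¹) * (a * c * a) * (a⁻¹ * d * a * c * d) := by group
      _ = (b * c * b⁻¹ * a * c⁻¹ * b⁻¹ * d * c * b * a⁻¹ * c⁻¹ * a * c * d * c⁻¹) * (c * a * c) * (a⁻¹ * d * a * c * d) := by rw [mul_right_cancel_iff, mul_left_cancel_iff]; exact h1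
      _ = (b * c * b⁻¹ * a * c⁻¹ * b⁻¹ * d * c * b * a⁻¹ * c⁻¹ * a * c * d * a * c * a⁻¹) * (d * a) * (a⁻¹ * a * c * d) := by group
      _ = (b * c * b⁻¹ * a * c⁻¹ * b⁻¹ * d * c * b * a⁻¹ * c⁻¹ * a * c * d * a * c * a⁻¹) * (a * d) * (a⁻¹ * a * c * d) := by rw [mul_right_cancel_iff, mul_left_cancel_iff]; exact h5.symm
      _ = (b * c * b⁻¹ * a * c⁻¹ * b⁻¹ * d * c * b * a⁻¹ * c⁻¹) * (a * c * a) * (a⁻¹ * d * a * c * d * c * d) := by group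
      _ = (b * c * b⁻¹ * a * c⁻¹ * b⁻¹ * d * c * b * a⁻¹ * c⁻¹) * (c * a * c) * (a⁻¹ * d * a * c * d * c * d) := by rw [mul_right_cancel_iff, mul_left_cancel_iff]; exact h1
      _ = (b * c * b⁻¹ * a * c⁻¹ * b⁻¹ * d * c * b * c * a⁻¹) * (d * a) * (a⁻¹ * a * c * d * c * d) := by group
      _ = (b * c * b⁻¹ * a * c⁻¹ * b⁻¹ * d * c * b * c * a⁻¹) * (a * d) * (a⁻¹ * a * c * d * c * d) := by rw [mul_right_cancel_iff, mul_left_cancel_iff]; exact h5.symm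
      _ = (b * c * b⁻¹ * a * c⁻¹ * b⁻¹) * (d * b) * (b⁻¹ * c * b * c * d * c * d * c * d) := by group
      _ = (b * c * b⁻¹ * a * c⁻¹ * b⁻¹) * (b * d) * (b⁻¹ * c * b * c * d * c * d * c * d) := by rw [mul_right_cancel_iff, mul_left_cancel_iff]; exact h6.symm
      _ = (b * c * b⁻¹ * a * c⁻¹ * d * b⁻¹) * (c * b * c) * (c⁻¹ * c * d * c * d * c * d) := by group
      _ = (b * c * b⁻¹ * a * c⁻¹ * d * b⁻¹) * (b * c * b) * (c⁻¹ * c * d * c * d * c * d) := by rw [mul_right_cancel_iff, mul_left_cancel_iff]; exact h2.symm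
      _ = (b * c * b⁻¹ * a * c⁻¹) * (d * c * d) * (d⁻¹ * b * d * c * d * c * d) := by group
      _ = (b * c * b⁻¹ * a * c⁻¹) * (c * d * c) * (d⁻¹ * b * d * c * d * c * d) := by rw [mul_right_cancel_iff, mul_left_cancel_iff]; exact h3.symm
      _ = (b * c * b⁻¹ * a * d * c * d⁻¹) * (b * d) * (d⁻¹ * d * c * d * c * d) := by group
      _ = (b * c * b⁻¹ * a * d * c * d⁻¹) * (d * b) * (d⁻¹ * d * c * d * c * d) := by rw [mul_right_cancel_iff, mul_left_cancel_iff]; exact h6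
      _ = (b * c * b⁻¹) * (a * b) * (b⁻¹ * d * c * b * c * d * c * d) := by group
      _ = (b * c * b⁻¹) * (b * a) * (b⁻¹ * d * c * b * c * d * c * d) := by rw [mul_right_cancel_iff, mul_left_cancel_iff]; exact h4
      _ = (b * c * a * b⁻¹) * (d * b) * (b⁻¹ * c * b * c * d * c * d) := by group
      _ = (b * c * a * b⁻¹) * (b * d) * (b⁻¹ * c * b * c * d * c * d) := by rw [mul_right_cancel_iff, mul_left_cancel_iff]; exact h6.symm
      _ = (b * c * a * d * b⁻¹) * (c * b * c) * (c⁻¹ * c * d * c * d) := by group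
      _ = (b * c * a * d * b⁻¹) * (b * c * b) * (c⁻¹ * c * d * c * d) := by rw [mul_right_cancel_iff, mul_left_cancel_iff]; exact h2.symm
      _ = (b * c * a * d * c) * (b * d) * (c * d) := by group
      _ = (b * c * a * d * c) * (d * b) * (c * d) := by rw [mul_right_cancel_iff, mul_left_cancel_iff]; exact h6
      _ = (b * c * a) * (d * c * d) * (b * c * d) := by group
      _ = (b * c * a) * (c * d * c) * (b * c * d) := by rw [mul_right_cancel_iff, mul_left_cancel_iff]; exact h3.symm
      _ = (b) * (c * a * c) * (d * c * b * c * d) := by group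
      _ = (b) * (a * c * a) * (d * c * b * c * d) := by rw [mul_right_cancel_iff, mul_left_cancel_iff]; exact h1.symm
      _ = (b * a * c) * (a * d) * (c * b * c * d) := by group
      _ = (b * a * c) * (d * a) * (c * b * c * d) := by rw [mul_right_cancel_iff, mul_left_cancel_iff]; exact h5
      _ = (b * a * c * d * a) * (c * b * c) * (d) := by group
      _ = (b * a * c * d * a) * (b * c * b) * (d) := by rw [mul_right_cancel_iff, mul_left_cancel_iff]; exact h2.symm
      _ = (b * a * c * d) * (a * b) * (c * b * d) := by group
      _ = (b * a * c * d) * (b * a) * (c * b * d) := by rw [mul_right_cancel_iff, mul_left_cancel_iff]; exact h4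
      _ = (b * a * c * d * b * a * c) * (b * d) * (1) := by group
      _ = (b * a * c * d * b * a * c) * (d * b) * (1) := by rw [mul_right_cancel_iff, mul_left_cancel_iff]; exact h6
      _ = b * a * c * d * (b * a * c * d) * b := by group
  have e3 : (a * b * c * d) ^ 3 = a * b * c * d * (a * b * c * d) * (a * b * c * d) := by
    rw [pow_succ, pow_succ, pow_one]
  have e4 : (a * c * d) ^ 4 = a * c * d * (a * c * d) * (a * c * d) * (a * c * d) := by
    rw [pow_succ, pow_succ, pow_succ, pow_one]
  rw [e3, e4, h4]
  calc b * a * c * d * (b * a * c * d) * (b * a * c * d) *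
        (a * c * d * (a * c * d) * (a * c * d) * (a * c * d))⁻¹
      = (b * a * c * d * (b * a * c * d) * b) *
          ((a * c * d) * (a * c * d * (a * c * d) * (a * c * d) * (a * c * d))⁻¹) := by
        group
    _ = (b * c * b⁻¹ * a * c⁻¹ * b⁻¹ * d * c * b * a⁻¹ * c⁻¹ * d⁻¹ *
          (a * c * d * (a * c * d) * (a * c * d))) *
          ((a * c * d) * (a * c * d * (a * c * d) * (a * c * d) * (a * c * d))⁻¹) := by
        rw [← key]
    _ = b * c * b⁻¹ * a * c⁻¹ * b⁻¹ * d * c * b * a⁻¹ * c⁻¹ * d⁻¹ := by group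

end ArtinTypeD

open ArtinTypeD in
/-- **Lemma 3.8 (ii)** of Labruère–Paris: in `A(D_4)`,
`Δ(x_1,x_2,x_3,x_4) Δ⁻²(x_1,x_3,x_4)`, i.e. `(x_1x_2x_3x_4)³ (x_1x_3x_4)⁻⁴`,
equals `x_2x_3x_2⁻¹x_1x_3⁻¹x_2⁻¹x_4x_3x_2x_1⁻¹x_3⁻¹x_4⁻¹`. -/
theorem lemma_3_8_ii :
    (x 4 1 * x 4 2 * x 4 3 * x 4 4) ^ 3 * ((x 4 1 * x 4 3 * x 4 4) ^ 4)⁻¹ =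
    x 4 2 * x 4 3 * (x 4 2)⁻¹ * x 4 1 * (x 4 3)⁻¹ * (x 4 2)⁻¹ *
      x 4 4 * x 4 3 * x 4 2 * (x 4 1)⁻¹ * (x 4 3)⁻¹ * (x 4 4)⁻¹ := by
  exact aux (x 4 1) (x 4 2) (x 4 3) (x 4 4)
    (braidD4 (i := 0) (j := 2) (by decide) rfl)
    (braidD4 (i := 1) (j := 2) (by decide) rfl)
    (braidD4 (i := 2) (j := 3) (by decide) rfl)
    (commD4 (i := 0) (j := 1) (by decide) rfl)
    (commD4 (i := 0) (j := 3) (by decide) rfl)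
    (commD4 (i := 1) (j := 3) (by decide) rfl)
end
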